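/- arXiv:0809.0393 — 6 statements merged into one kernel-verified Lean document; each statement's English description precedes it below -/
import Mathlib

section
/- Let K be a compact topological space and let Φ : C(K) → ℝ be a positive linear functional. For bounded f : K → [0,∞), define Φ̄(f) := sup { Φ g : g ∈ C(K), 0 ≤ g ≤ f }. Let (fₙ) be a sequence of functions fₙ : K → [0,∞) such that f₁ ≤ α for some finite constant α, and such that for every x ∈ K the sequence fₙ(x) decreases monotonically to 0. Then Φ̄(fₙ) → 0 as n → ∞. -/
open Filter Topology

/-- For a positive linear functional `Φ` on `C(K)` and a bounded nonnegative function
`f : K → ℝ`, the extension `Φ̄(f)` is the supremum of `Φ g` over continuous `g` with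
`0 ≤ g ≤ f`. -/
noncomputable def PhiBar {K : Type*} [TopologicalSpace K] [CompactSpace K]
    (Φ : C(K, ℝ) →ₗ[ℝ] ℝ) (f : K → ℝ) : ℝ :=
  sSup {r : ℝ | ∃ g : C(K, ℝ), (∀ x, 0 ≤ g x) ∧ (∀ x, g x ≤ f x) ∧ Φ g = r}

theorem stmt_1 {K : Type*} [TopologicalSpace K] [CompactSpace K]
    (Φ : C(K, ℝ) →ₗ[ℝ] ℝ)
    (hΦpos : ∀ g : C(K, ℝ), (∀ x, 0 ≤ g x) → 0 ≤ Φ g)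
    (f : ℕ → K → ℝ) (α : ℝ)
    (hf0 : ∀ n x, 0 ≤ f n x)
    (hα : ∀ x, f 0 x ≤ α)
    (hmono : ∀ n x, f (n + 1) x ≤ f n x)
    (hlim : ∀ x, Tendsto (fun n => f n x) atTop (𝓝 0)) :
    Tendsto (fun n => PhiBar Φ (f n)) atTop (𝓝 0) := by
  -- Φ is monotone
  have hΦmono : ∀ g₁ g₂ : C(K, ℝ), (∀ x, g₁ x ≤ g₂ x) → Φ g₁ ≤ Φ g₂ := by
    intro g₁ g₂ hle
    have := hΦpos (g₂ - g₁) (fun x => by simpa using sub_nonneg.2 (hle x))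
    rw [map_sub] at this
    linarith
  have hΦconst : ∀ c : ℝ, Φ (c • (1 : C(K, ℝ))) = c * Φ 1 := by
    intro c; rw [map_smul]; rfl
  -- the sets and their suprema
  set S : ℕ → Set ℝ := fun n =>
    {r : ℝ | ∃ g : C(K, ℝ), (∀ x, 0 ≤ g x) ∧ (∀ x, g x ≤ f n x) ∧ Φ g = r} with hS
  have hPhiBar : ∀ n, PhiBar Φ (f n) = sSup (S n) := fun n => rfl
  set s : ℕ → ℝ := fun n => sSup (S n) with hsdef
  have hf_anti : ∀ m n, m ≤ n → ∀ x, f n x ≤ f m x := by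
    intro m n hmn
    induction n with
    | zero => simp_all
    | succ n ih =>
      rcases Nat.lt_or_ge m (n+1) with h | h
      · intro x; exact le_trans (hmono n x) (ih (Nat.lt_succ_iff.mp h) x)
      · have : m = n + 1 := le_antisymm hmn h
        subst this; intro x; rfl
  have h0mem : ∀ n, (0 : ℝ) ∈ S n :=
    fun n => ⟨0, fun x => le_refl _, fun x => hf0 n x, map_zero Φ⟩
  have hbdd : ∀ n, BddAbove (S n) := by
    intro n
    refine ⟨α * Φ 1, ?_⟩
    rintro r ⟨g, hg0, hgle, rfl⟩
    rw [← hΦconst α]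
    refine hΦmono _ _ fun x => ?_
    simpa using (hgle x).trans ((hf_anti 0 n (Nat.zero_le n) x).trans (hα x))
  have hs_nonneg : ∀ n, 0 ≤ s n := fun n => le_csSup (hbdd n) (h0mem n)
  have hs_anti : Antitone s := by
    refine antitone_nat_of_succ_le fun n => ?_
    refine csSup_le_csSup (hbdd n) ⟨0, h0mem _⟩ ?_
    rintro r ⟨g, hg0, hgle, rfl⟩
    exact ⟨g, hg0, fun x => (hgle x).trans (hmono n x), rfl⟩
  set L : ℝ := ⨅ n, s n with hLdef
  have hbddbelow : BddBelow (Set.range s) := ⟨0, by rintro r ⟨n, rfl⟩; exact hs_nonneg n⟩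
  have hstendsto : Tendsto s atTop (𝓝 L) := tendsto_atTop_ciInf hs_anti hbddbelow
  have hL0 : 0 ≤ L := le_ciInf hs_nonneg
  have hLle : ∀ n, L ≤ s n := fun n => ciInf_le hbddbelow n
  simp only [hPhiBar]
  -- It suffices to show L = 0
  suffices hL : L = 0 by rw [← hL]; exact hstendsto
  by_contra hLne
  have hLpos : 0 < L := lt_of_le_of_ne hL0 (Ne.symm hLne)
  -- choose near-optimal continuous minorants
  have hex : ∀ n, ∃ g : C(K, ℝ), (∀ x, 0 ≤ g x) ∧ (∀ x, g x ≤ f n x) ∧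
      s n - L / 2 * (1 / 2) ^ (n + 1) < Φ g := by
    intro n
    have hlt : s n - L / 2 * (1 / 2) ^ (n + 1) < s n := by
      have : 0 < L / 2 * (1 / 2) ^ (n + 1) := by positivity
      linarith
    obtain ⟨r, hr, hrlt⟩ := exists_lt_of_lt_csSup ⟨0, h0mem n⟩ hlt
    obtain ⟨g, hg0, hgle, rfl⟩ := hr
    exact ⟨g, hg0, hgle, hrlt⟩
  choose g hg0 hgle hgΦ using hex
  -- running minima
  set h : ℕ → C(K, ℝ) := fun n => Nat.rec (g 0) (fun n hn => hn ⊓ g (n + 1)) n with hhdef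
  have hsucc : ∀ n, h (n + 1) = h n ⊓ g (n + 1) := fun n => rfl
  have hh0 : ∀ n x, 0 ≤ h n x := by
    intro n
    induction n with
    | zero => exact hg0 0
    | succ n ih =>
      intro x
      rw [hsucc]
      simp only [ContinuousMap.inf_apply, le_min_iff]
      exact ⟨ih x, hg0 (n + 1) x⟩
  have hhle : ∀ n x, h n x ≤ f n x := by
    intro n
    induction n with
    | zero => exact hgle 0
    | succ n ih =>
      intro x
      rw [hsucc]
      simp only [ContinuousMap.inf_apply]
      exact (min_le_right _ _).trans (hgle (n + 1) x)
  have hh_step : ∀ n x, h (n + 1) x ≤ h n x := by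
    intro n x
    rw [hsucc]
    simp only [ContinuousMap.inf_apply]
    exact min_le_left _ _
  have hh_anti : ∀ m n, m ≤ n → ∀ x, h n x ≤ h m x := by
    intro m n hmn
    induction n with
    | zero => simp_all
    | succ n ih =>
      rcases Nat.lt_or_ge m (n+1) with hc | hc
      · intro x; exact (hh_step n x).trans (ih (Nat.lt_succ_iff.mp hc) x)
      · have : m = n + 1 := le_antisymm hmn hc
        subst this; intro x; rfl
  -- key estimate by induction
  have hkey : ∀ n, s n - L / 2 * (1 - (1 / 2) ^ (n + 1)) < Φ (h n) := by
    intro n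
    induction n with
    | zero =>
      have := hgΦ 0
      have heq : (h 0 : C(K, ℝ)) = g 0 := rfl
      rw [heq]
      norm_num at this ⊢
      linarith
    | succ n ih =>
      -- Φ (h n ⊓ g (n+1)) = Φ (h n) + Φ (g (n+1)) - Φ (h n ⊔ g (n+1))
      have hsum : (h n ⊓ g (n + 1)) + (h n ⊔ g (n + 1)) = h n + g (n + 1) := by
        ext x
        simp [min_add_max]
      have hΦsum : Φ (h (n + 1)) + Φ (h n ⊔ g (n + 1)) = Φ (h n) + Φ (g (n + 1)) := by
        rw [hsucc, ← map_add, ← map_add, hsum]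
      have hsup_le : Φ (h n ⊔ g (n + 1)) ≤ s n := by
        refine le_csSup (hbdd n) ⟨h n ⊔ g (n + 1), ?_, ?_, rfl⟩
        · intro x
          simp only [ContinuousMap.sup_apply, le_max_iff]
          exact Or.inl (hh0 n x)
        · intro x
          simp only [ContinuousMap.sup_apply, max_le_iff]
          exact ⟨hhle n x, (hgle (n + 1) x).trans (hmono n x)⟩
      have hg1 := hgΦ (n + 1)
      have hpow : (1 / 2 : ℝ) ^ (n + 1 + 1) + (1 / 2) ^ (n + 1 + 1) = (1 / 2) ^ (n + 1) := by
        ring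
      have : Φ (h (n + 1)) = Φ (h n) + Φ (g (n + 1)) - Φ (h n ⊔ g (n + 1)) := by linarith
      rw [this]
      have h1 : s n - L / 2 * (1 - (1 / 2) ^ (n + 1)) < Φ (h n) := ih
      have h2 : s (n + 1) - L / 2 * (1 / 2) ^ (n + 1 + 1) < Φ (g (n + 1)) := hg1
      nlinarith [hsup_le, h1, h2, hpow]
  have hkey' : ∀ n, L / 2 < Φ (h n) := by
    intro n
    have h1 := hkey n
    have h2 : (0:ℝ) < (1 / 2) ^ (n + 1) := by positivity
    have h3 := hLle n
    nlinarith
  -- uniform smallness by compactness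
  have hΦ1 : 0 ≤ Φ 1 := hΦpos 1 (fun x => by norm_num)
  set ε : ℝ := L / (2 * (Φ 1 + 1)) with hεdef
  have hεpos : 0 < ε := by positivity
  -- the open sets where h m < ε cover K
  have hcover : (Set.univ : Set K) ⊆ ⋃ m, (fun x => h m x) ⁻¹' Set.Iio ε := by
    intro x _
    obtain ⟨m, hm⟩ := ((hlim x).eventually_lt_const hεpos).exists
    exact Set.mem_iUnion.2 ⟨m, lt_of_le_of_lt (hhle m x) hm⟩
  obtain ⟨t, ht⟩ := isCompact_univ.elim_finite_subcover
    (fun m => (fun x => h m x) ⁻¹' Set.Iio ε)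
    (fun m => isOpen_Iio.preimage (h m).continuous) hcover
  set N : ℕ := t.sup id with hNdef
  have hsmall : ∀ x, h N x < ε := by
    intro x
    obtain ⟨m, hmt, hmx⟩ := Set.mem_iUnion₂.1 (ht (Set.mem_univ x))
    have hmN : m ≤ N := Finset.le_sup (f := id) hmt
    exact lt_of_le_of_lt (hh_anti m N hmN x) hmx
  have hΦhN : Φ (h N) ≤ ε * Φ 1 := by
    rw [← hΦconst ε]
    refine hΦmono _ _ fun x => ?_
    simpa using (hsmall x).le
  have hne : Φ 1 + 1 ≠ 0 := by positivity
  have hεΦ : ε * (Φ 1 + 1) = L / 2 := by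
    rw [hεdef]; field_simp
  have := hkey' N
  nlinarith [hεpos, hΦ1]
end

section
/- Let K be a compact topological space and let Φ : C(K) → ℝ be a positive linear functional. Let (gₙ) be a sequence in C(K) with 0 ≤ gₙ ≤ α for every n, for some finite constant α, such that gₙ(x) → 0 for every x ∈ K. Then Φ gₙ → 0 as n → ∞. -/
open Filter Topology Set TopologicalSpace MeasureTheory ENNReal NNReal

section RieszAux

variable {K : Type*} [TopologicalSpace K] [CompactSpace K]
variable (Φ : C(K, ℝ) →ₗ[ℝ] ℝ)

/-- Test functions for the Riesz content of a set `C`. -/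
def bctTest (C : Set K) : Set C(K, ℝ) :=
  {u : C(K, ℝ) | (∀ x, 0 ≤ u x) ∧ ∀ x ∈ C, 1 ≤ u x}

lemma bctTest_one_mem (C : Set K) : (1 : C(K, ℝ)) ∈ bctTest C :=
  ⟨fun _ => zero_le_one, fun _ _ => le_refl 1⟩

/-- The Riesz content of a set. -/
noncomputable def bctRz (C : Set K) : ℝ := sInf (Φ '' bctTest C)

variable (hΦpos : ∀ g : C(K, ℝ), (∀ x, 0 ≤ g x) → 0 ≤ Φ g)
include hΦpos

lemma bctMono {u v : C(K, ℝ)} (h : ∀ x, u x ≤ v x) : Φ u ≤ Φ v := by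
  have h0 : 0 ≤ Φ (v - u) := hΦpos _ (fun x => by
    simpa [ContinuousMap.sub_apply, sub_nonneg] using h x)
  rw [map_sub] at h0; linarith

lemma bctRz_bddBelow (C : Set K) : BddBelow (Φ '' bctTest C) :=
  ⟨0, fun r ⟨u, hu, hur⟩ => hur ▸ hΦpos u hu.1⟩

lemma bctRz_nonneg (C : Set K) : 0 ≤ bctRz Φ C :=
  le_csInf ⟨Φ 1, 1, bctTest_one_mem C, rfl⟩ (fun r ⟨u, hu, hur⟩ => hur ▸ hΦpos u hu.1)

lemma bctRz_le {C : Set K} {u : C(K, ℝ)} (hu : u ∈ bctTest C) : bctRz Φ C ≤ Φ u :=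
  csInf_le (bctRz_bddBelow Φ hΦpos C) ⟨u, hu, rfl⟩

lemma le_bctRz {C : Set K} {a : ℝ} (h : ∀ u ∈ bctTest C, a ≤ Φ u) : a ≤ bctRz Φ C :=
  le_csInf ⟨Φ 1, 1, bctTest_one_mem C, rfl⟩ (fun r ⟨u, hu, hur⟩ => hur ▸ h u hu)

lemma bctRz_mono {C₁ C₂ : Set K} (h : C₁ ⊆ C₂) : bctRz Φ C₁ ≤ bctRz Φ C₂ :=
  csInf_le_csInf (bctRz_bddBelow Φ hΦpos C₁) ⟨Φ 1, 1, bctTest_one_mem C₂, rfl⟩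
    (Set.image_mono (fun u hu => ⟨hu.1, fun x hx => hu.2 x (h hx)⟩))

lemma bctRz_sup_le (C₁ C₂ : Set K) :
    bctRz Φ (C₁ ∪ C₂) ≤ bctRz Φ C₁ + bctRz Φ C₂ := by
  apply _root_.le_of_forall_pos_le_add
  intro ε hε
  obtain ⟨r₁, ⟨u₁, hu₁, rfl⟩, hr₁⟩ :=
    exists_lt_of_csInf_lt (s := Φ '' bctTest C₁) ⟨Φ 1, 1, bctTest_one_mem C₁, rfl⟩
      (lt_add_of_pos_right _ (half_pos hε))
  obtain ⟨r₂, ⟨u₂, hu₂, rfl⟩, hr₂⟩ :=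
    exists_lt_of_csInf_lt (s := Φ '' bctTest C₂) ⟨Φ 1, 1, bctTest_one_mem C₂, rfl⟩
      (lt_add_of_pos_right _ (half_pos hε))
  have hmem : u₁ + u₂ ∈ bctTest (C₁ ∪ C₂) := by
    refine ⟨fun x => add_nonneg (hu₁.1 x) (hu₂.1 x), ?_⟩
    rintro x (hx | hx)
    · exact le_add_of_le_of_nonneg (hu₁.2 x hx) (hu₂.1 x)
    · exact le_add_of_nonneg_of_le (hu₁.1 x) (hu₂.2 x hx)
  calc bctRz Φ (C₁ ∪ C₂) ≤ Φ (u₁ + u₂) := bctRz_le Φ hΦpos hmem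
    _ = Φ u₁ + Φ u₂ := map_add _ _ _
    _ ≤ (bctRz Φ C₁ + ε / 2) + (bctRz Φ C₂ + ε / 2) := by
        unfold bctRz; exact add_le_add hr₁.le hr₂.le
    _ = bctRz Φ C₁ + bctRz Φ C₂ + ε := by ring

lemma bctRz_sup_disjoint [T2Space K] {C₁ C₂ : Set K} (h₁ : IsClosed C₁) (h₂ : IsClosed C₂)
    (hd : Disjoint C₁ C₂) :
    bctRz Φ (C₁ ∪ C₂) = bctRz Φ C₁ + bctRz Φ C₂ := by
  refine le_antisymm (bctRz_sup_le Φ hΦpos C₁ C₂) ?_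
  refine le_bctRz Φ hΦpos (fun u hu => ?_)
  obtain ⟨φ, hφ0, hφ1, hφmem⟩ := exists_continuous_zero_one_of_isClosed h₂ h₁ hd.symm
  have hmem₁ : u * φ ∈ bctTest C₁ := by
    refine ⟨fun x => mul_nonneg (hu.1 x) (hφmem x).1, fun x hx => ?_⟩
    have : φ x = 1 := hφ1 hx
    rw [ContinuousMap.mul_apply, this, mul_one]
    exact hu.2 x (Or.inl hx)
  have hmem₂ : u * (1 - φ) ∈ bctTest C₂ := by
    refine ⟨fun x => mul_nonneg (hu.1 x) (by
      simp only [ContinuousMap.sub_apply, ContinuousMap.one_apply, sub_nonneg]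
      exact (hφmem x).2), fun x hx => ?_⟩
    have : φ x = 0 := hφ0 hx
    simp only [ContinuousMap.mul_apply, ContinuousMap.sub_apply, ContinuousMap.one_apply, this,
      sub_zero, mul_one]
    exact hu.2 x (Or.inr hx)
  have hsum : u * φ + u * (1 - φ) = u := by ext x; simp [ContinuousMap.mul_apply]; ring
  calc bctRz Φ C₁ + bctRz Φ C₂ ≤ Φ (u * φ) + Φ (u * (1 - φ)) :=
        add_le_add (bctRz_le Φ hΦpos hmem₁) (bctRz_le Φ hΦpos hmem₂)
    _ = Φ (u * φ + u * (1 - φ)) := (map_add _ _ _).symm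
    _ = Φ u := by rw [hsum]

/-- The Riesz content, as a `Content`. -/
noncomputable def bctContent [T2Space K] : Content K where
  toFun C := (bctRz Φ C.1).toNNReal
  mono' K₁ K₂ h := Real.toNNReal_mono (bctRz_mono Φ hΦpos h)
  sup_disjoint' K₁ K₂ hd hc₁ hc₂ := by
    have hcar : (K₁ ⊔ K₂).carrier = K₁.carrier ∪ K₂.carrier := rfl
    rw [hcar,
      show bctRz Φ (K₁.carrier ∪ K₂.carrier) = bctRz Φ K₁.carrier + bctRz Φ K₂.carrier from
        bctRz_sup_disjoint Φ hΦpos hc₁ hc₂ hd,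
      Real.toNNReal_add (bctRz_nonneg Φ hΦpos _) (bctRz_nonneg Φ hΦpos _)]
  sup_le' K₁ K₂ := by
    have hcar : (K₁ ⊔ K₂).carrier = K₁.carrier ∪ K₂.carrier := rfl
    rw [hcar]
    refine le_trans (Real.toNNReal_mono (bctRz_sup_le Φ hΦpos K₁.1 K₂.1)) ?_
    exact Real.toNNReal_add_le

/-- Key upper bound: if `0 ≤ f ≤ α` and `f` vanishes outside `C`, then `Φ f ≤ α * bctRz C`. -/
lemma bctPhi_le {C : Set K} {f : C(K, ℝ)} {α : ℝ} (hα : 0 ≤ α)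
    (hf0 : ∀ x, 0 ≤ f x) (hfα : ∀ x, f x ≤ α) (hsupp : ∀ x, x ∉ C → f x = 0) :
    Φ f ≤ α * bctRz Φ C := by
  rcases eq_or_lt_of_le hα with hα0 | hα0
  · have : f = 0 := by
      ext x; exact le_antisymm (by rw [← hα0] at hfα; exact hfα x) (hf0 x)
    simp [this, ← hα0]
  · have key : α⁻¹ * Φ f ≤ bctRz Φ C := by
      refine le_bctRz Φ hΦpos (fun u hu => ?_)
      have : Φ (α⁻¹ • f) ≤ Φ u := by
        refine bctMono Φ hΦpos (fun x => ?_)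
        rw [ContinuousMap.smul_apply, smul_eq_mul]
        by_cases hx : x ∈ C
        · calc α⁻¹ * f x ≤ α⁻¹ * α := by
                exact mul_le_mul_of_nonneg_left (hfα x) (inv_nonneg.mpr hα)
            _ = 1 := inv_mul_cancel₀ hα0.ne'
            _ ≤ u x := hu.2 x hx
        · rw [hsupp x hx, mul_zero]; exact hu.1 x
      rwa [_root_.map_smul, smul_eq_mul] at this
    calc Φ f = α * (α⁻¹ * Φ f) := by field_simp
      _ ≤ α * bctRz Φ C := mul_le_mul_of_nonneg_left key hα
end RieszAux

theorem bct_t2 {K : Type*} [TopologicalSpace K] [CompactSpace K] [T2Space K]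
    (Φ : C(K, ℝ) →ₗ[ℝ] ℝ)
    (hΦpos : ∀ g : C(K, ℝ), (∀ x, 0 ≤ g x) → 0 ≤ Φ g)
    (g : ℕ → C(K, ℝ)) (α : ℝ) (hα : 0 ≤ α)
    (hg0 : ∀ n x, 0 ≤ g n x) (hgα : ∀ n x, g n x ≤ α)
    (hlim : ∀ x, Tendsto (fun n => g n x) atTop (𝓝 0)) :
    Tendsto (fun n => Φ (g n)) atTop (𝓝 0) := by
  borelize K
  set μ := (bctContent Φ hΦpos).measure with hμdef
  have hfin : μ univ < ⊤ := by
    rw [hμdef, Content.measure_apply _ MeasurableSet.univ]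
    exact (bctContent Φ hΦpos).outerMeasure_lt_top_of_isCompact isCompact_univ
  have hrz_le_μ : ∀ C : Set K, IsClosed C → ENNReal.ofReal (bctRz Φ C) ≤ μ C := by
    intro C hC
    rw [hμdef, Content.measure_apply _ hC.measurableSet]
    have h := Content.le_outerMeasure_compacts (bctContent Φ hΦpos) ⟨C, hC.isCompact⟩
    exact le_trans (le_of_eq rfl) h
  have hΦ1 : 0 ≤ Φ 1 := hΦpos 1 (fun x => by simp)
  have hpos : ∀ n, 0 ≤ Φ (g n) := fun n => hΦpos _ (hg0 n)
  rw [Metric.tendsto_atTop]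
  intro δ hδ
  set ε : ℝ := δ / (2 * (Φ 1 + 1)) with hεdef
  have hε : 0 < ε := div_pos hδ (by linarith)
  set E : ℕ → Set K := fun k => {x | ε ≤ g k x} with hE
  have hEclosed : ∀ k, IsClosed (E k) :=
    fun k => isClosed_le continuous_const (g k).continuous
  set F : ℕ → Set K := fun n => ⋃ k, ⋃ (_ : n ≤ k), E k with hF
  have hFmeas : ∀ n, MeasurableSet (F n) := fun n =>
    MeasurableSet.iUnion fun k => MeasurableSet.iUnion fun _ => (hEclosed k).measurableSet
  have hFanti : Antitone F := by
    intro m n hmn x hx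
    simp only [hF, mem_iUnion] at hx ⊢
    obtain ⟨k, hk, hxk⟩ := hx
    exact ⟨k, hmn.trans hk, hxk⟩
  have hFempty : ⋂ n, F n = ∅ := by
    ext x
    simp only [mem_iInter, mem_empty_iff_false, iff_false, not_forall]
    have hev : ∀ᶠ k in atTop, g k x < ε := (hlim x).eventually_lt_const hε
    obtain ⟨N, hN⟩ := eventually_atTop.mp hev
    refine ⟨N, ?_⟩
    simp only [hF, mem_iUnion, not_exists]
    intro k hk hxk
    exact absurd hxk (not_le.mpr (hN k hk))
  have htend := tendsto_measure_iInter_atTop (μ := μ)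
    (fun n => (hFmeas n).nullMeasurableSet) hFanti
    ⟨0, (lt_of_le_of_lt (measure_mono (subset_univ _)) hfin).ne⟩
  rw [hFempty, measure_empty] at htend
  have hc : (0 : ℝ≥0∞) < ENNReal.ofReal (δ / (2 * (α + 1))) := by
    rw [ENNReal.ofReal_pos]; positivity
  obtain ⟨N, hN⟩ := eventually_atTop.mp (htend.eventually_lt_const hc)
  refine ⟨N, fun n hn => ?_⟩
  rw [dist_zero_right, Real.norm_eq_abs, abs_of_nonneg (hpos n)]
  set v : C(K, ℝ) := g n ⊓ ContinuousMap.const K ε with hvdef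
  have hvx : ∀ x, v x = min (g n x) ε := fun x => rfl
  have hΦc : Φ (ContinuousMap.const K ε) = ε * Φ 1 := by
    have hc1 : ContinuousMap.const K ε = ε • (1 : C(K, ℝ)) := by ext x; simp
    rw [hc1, _root_.map_smul, smul_eq_mul]
  have hv_le : Φ v ≤ ε * Φ 1 := by
    rw [← hΦc]
    exact bctMono Φ hΦpos (fun x => by rw [hvx]; exact min_le_right _ _)
  set f : C(K, ℝ) := g n - v with hfdef
  have hfx : ∀ x, f x = g n x - min (g n x) ε := fun x => rfl
  have hf0 : ∀ x, 0 ≤ f x := fun x => by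
    rw [hfx]; exact sub_nonneg.mpr (min_le_left _ _)
  have hfα : ∀ x, f x ≤ α := fun x => by
    rw [hfx]
    have := le_min (hg0 n x) hε.le
    linarith [hgα n x]
  have hsupp : ∀ x, x ∉ E n → f x = 0 := fun x hx => by
    have hlt : g n x < ε := not_le.mp hx
    rw [hfx, min_eq_left hlt.le, sub_self]
  have hfE : Φ f ≤ α * bctRz Φ (E n) := bctPhi_le Φ hΦpos hα hf0 hfα hsupp
  have h1 : ENNReal.ofReal (bctRz Φ (E n)) ≤ μ (F N) := by
    refine le_trans (hrz_le_μ (E n) (hEclosed n)) (measure_mono ?_)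
    intro x hx
    simp only [hF, mem_iUnion]
    exact ⟨n, hn, hx⟩
  have h2 : bctRz Φ (E n) ≤ δ / (2 * (α + 1)) := by
    have hle := le_trans h1 (hN N le_rfl).le
    rwa [ENNReal.ofReal_le_ofReal_iff (by positivity)] at hle
  have hsum : Φ (g n) = Φ v + Φ f := by
    rw [hfdef, map_sub]; ring
  have htpos : 0 < δ / (2 * (α + 1)) := by positivity
  have hε1 : ε * (2 * (Φ 1 + 1)) = δ := div_mul_cancel₀ _ (by positivity)
  have ht1 : (δ / (2 * (α + 1))) * (2 * (α + 1)) = δ := div_mul_cancel₀ _ (by positivity)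
  calc Φ (g n) = Φ v + Φ f := hsum
    _ ≤ ε * Φ 1 + α * (δ / (2 * (α + 1))) :=
        add_le_add hv_le (le_trans hfE (mul_le_mul_of_nonneg_left h2 hα))
    _ < δ := by nlinarith [hε, htpos, hε1, ht1, hΦ1, hα]

theorem stmt_2 {K : Type*} [TopologicalSpace K] [CompactSpace K]
    (Φ : C(K, ℝ) →ₗ[ℝ] ℝ)
    (hΦpos : ∀ g : C(K, ℝ), (∀ x, 0 ≤ g x) → 0 ≤ Φ g)
    (g : ℕ → C(K, ℝ)) (α : ℝ)
    (hg0 : ∀ n x, 0 ≤ g n x)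
    (hgα : ∀ n x, g n x ≤ α)
    (hlim : ∀ x, Tendsto (fun n => g n x) atTop (𝓝 0)) :
    Tendsto (fun n => Φ (g n)) atTop (𝓝 0) := by
  obtain hK | hK := isEmpty_or_nonempty K
  · have hg : ∀ n, g n = 0 := fun n => ContinuousMap.ext fun x => (hK.false x).elim
    have : (fun n => Φ (g n)) = fun _ => (0 : ℝ) := by
      funext n; rw [hg n, map_zero]
    rw [this]
    exact tendsto_const_nhds
  · obtain ⟨x₀⟩ := hK
    have hα : 0 ≤ α := le_trans (hg0 0 x₀) (hgα 0 x₀)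
    let ev : K → (C(K, ℝ) → ℝ) := fun x f => f x
    have hev : Continuous ev := continuous_pi fun f => f.continuous
    have hcomp : IsCompact (Set.range ev) := isCompact_range hev
    haveI : CompactSpace (Set.range ev) := isCompact_iff_compactSpace.mp hcomp
    let e : C(K, Set.range ev) := ⟨fun x => ⟨ev x, mem_range_self x⟩, hev.subtype_mk _⟩
    let Φ' : C(Set.range ev, ℝ) →ₗ[ℝ] ℝ :=
      { toFun := fun h => Φ (h.comp e)
        map_add' := fun h₁ h₂ => by
          show Φ ((h₁ + h₂).comp e) = Φ (h₁.comp e) + Φ (h₂.comp e)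
          rw [ContinuousMap.add_comp, map_add]
        map_smul' := fun c h => by
          show Φ ((c • h).comp e) = c • Φ (h.comp e)
          rw [ContinuousMap.smul_comp, _root_.map_smul] }
    have hΦ'pos : ∀ h : C(Set.range ev, ℝ), (∀ y, 0 ≤ h y) → 0 ≤ Φ' h :=
      fun h hh => hΦpos _ (fun x => hh (e x))
    let g' : ℕ → C(Set.range ev, ℝ) := fun n =>
      ⟨fun y => (y : C(K, ℝ) → ℝ) (g n), (continuous_apply (g n)).comp continuous_subtype_val⟩
    have hg'0 : ∀ n (y : Set.range ev), 0 ≤ g' n y := by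
      rintro n ⟨v, x, rfl⟩; exact hg0 n x
    have hg'α : ∀ n (y : Set.range ev), g' n y ≤ α := by
      rintro n ⟨v, x, rfl⟩; exact hgα n x
    have hlim' : ∀ y : Set.range ev, Tendsto (fun n => g' n y) atTop (𝓝 0) := by
      rintro ⟨v, x, rfl⟩; exact hlim x
    have key := bct_t2 Φ' hΦ'pos g' α hα hg'0 hg'α hlim'
    exact key.congr (fun n => congrArg Φ (ContinuousMap.ext fun x => rfl))
end

section
/- Let K be a compact topological space and let (fₙ) be a sequence in C(K) with 0 ≤ fₙ ≤ α for every n, for some finite constant α, such that fₙ(x) → 0 for every x ∈ K. Then for every ε > 0 there exists a convex combination g of the functions f₁, f₂, … (i.e., g = Σᵢ λᵢ f_{nᵢ} for finitely many indices nᵢ and nonnegative coefficients λᵢ summing to 1) such that g(x) ≤ ε for all x ∈ K. -/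
set_option maxHeartbeats 2000000


open Filter Topology

theorem stmt_4 {K : Type*} [TopologicalSpace K] [CompactSpace K]
    (f : ℕ → C(K, ℝ)) (α : ℝ)
    (hf0 : ∀ n x, 0 ≤ f n x)
    (hfα : ∀ n x, f n x ≤ α)
    (hlim : ∀ x, Tendsto (fun n => f n x) atTop (𝓝 0))
    (ε : ℝ) (hε : 0 < ε) :
    ∃ g ∈ convexHull ℝ (Set.range f), ∀ x, g x ≤ ε := by
  classical
  rcases isEmpty_or_nonempty K with hK | hK
  · exact ⟨f 0, subset_convexHull ℝ _ ⟨0, rfl⟩, fun x => (hK.false x).elim⟩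
  haveI hK' : Nonempty K := hK
  obtain ⟨x₀⟩ := id hK
  have hα0 : (0:ℝ) ≤ α := le_trans (hf0 0 x₀) (hfα 0 x₀)
  by_contra hcon
  push_neg at hcon
  -- hcon : ∀ g ∈ convexHull ℝ (Set.range f), ∃ x, ε < g x
  set Cs : ℕ → Set C(K, ℝ) := fun k => convexHull ℝ (f '' Set.Ici k) with hCs
  have Cmono : ∀ {k l : ℕ}, k ≤ l → Cs l ⊆ Cs k := fun {k l} hkl =>
    convexHull_mono (Set.image_mono (Set.Ici_subset_Ici.mpr hkl))
  have Csub : ∀ k, Cs k ⊆ convexHull ℝ (Set.range f) := fun k =>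
    convexHull_mono (by rintro - ⟨j, -, rfl⟩; exact ⟨j, rfl⟩)
  have Cne : ∀ k, (Cs k).Nonempty := fun k =>
    ⟨f k, subset_convexHull ℝ _ ⟨k, Set.self_mem_Ici, rfl⟩⟩
  have Cconv : ∀ k, Convex ℝ (Cs k) := fun k => convex_convexHull ℝ _
  have Cbound : ∀ k, ∀ g ∈ Cs k, ∀ x, 0 ≤ g x ∧ g x ≤ α := by
    intro k
    have : Cs k ⊆ {g : C(K,ℝ) | ∀ x, 0 ≤ g x ∧ g x ≤ α} := by
      apply convexHull_min
      · rintro - ⟨j, -, rfl⟩ x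
        exact ⟨hf0 j x, hfα j x⟩
      · intro g₁ hg₁ g₂ hg₂ a b ha hb hab
        intro x
        have e1 := hg₁ x; have e2 := hg₂ x
        simp only [ContinuousMap.add_apply, ContinuousMap.coe_smul, Pi.smul_apply,
          smul_eq_mul]
        constructor
        · nlinarith [e1.1, e2.1]
        · nlinarith [e1.2, e2.2]
    exact fun g hg => this hg
  have Cnorm : ∀ k, ∀ g ∈ Cs k, ‖g‖ ≤ α := by
    intro k g hg
    rw [ContinuousMap.norm_le _ hα0]
    intro x
    have := Cbound k g hg x
    rw [Real.norm_eq_abs, abs_le]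
    constructor <;> linarith [this.1, this.2]
  -- the near-minimizing choice
  have spec : ∀ (k : ℕ) (g : C(K, ℝ)), ∃ w ∈ Cs k,
      ‖g + ((2:ℝ)⁻¹)^k • w‖ <
        sInf ((fun w' => ‖g + ((2:ℝ)⁻¹)^k • w'‖) '' Cs k) + (ε/4) * ((4:ℝ)⁻¹)^k := by
    intro k g
    obtain ⟨v, hv, hvlt⟩ := Real.lt_sInf_add_pos ((Cne k).image _)
      (show (0:ℝ) < (ε/4) * ((4:ℝ)⁻¹)^k by positivity)
    obtain ⟨w, hw, rfl⟩ := hv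
    exact ⟨w, hw, hvlt⟩
  choose pick hpick₁ hpick₂ using spec
  set H : ℕ → C(K, ℝ) := fun k =>
    Nat.rec 0 (fun k hk => hk + ((2:ℝ)⁻¹)^(k+1) • pick k hk) k with hH
  have Hsucc : ∀ k, H (k+1) = H k + ((2:ℝ)⁻¹)^(k+1) • pick k (H k) := fun k => rfl
  set w : ℕ → C(K, ℝ) := fun k => pick k (H k) with hw
  have wmem : ∀ k, w k ∈ Cs k := fun k => hpick₁ k (H k)
  set c : ℕ → ℝ := fun k => sInf ((fun w' => ‖H k + ((2:ℝ)⁻¹)^k • w'‖) '' Cs k) with hc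
  have wlt : ∀ k, ‖H k + ((2:ℝ)⁻¹)^k • w k‖ < c k + (ε/4) * ((4:ℝ)⁻¹)^k :=
    fun k => hpick₂ k (H k)
  set u : ℕ → C(K, ℝ) := fun j => ((2:ℝ)⁻¹)^(j+1) • w j with hu
  have Hsum : ∀ k, H k = ∑ j ∈ Finset.range k, u j := by
    intro k
    induction k with
    | zero => rfl
    | succ k ih => rw [Finset.sum_range_succ, ← ih, Hsucc]
  have unorm : ∀ j, ‖u j‖ ≤ ((2:ℝ)⁻¹)^(j+1) * α := by
    intro j
    show ‖((2:ℝ)⁻¹)^(j+1) • w j‖ ≤ ((2:ℝ)⁻¹)^(j+1) * α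
    refine le_trans (norm_smul_le (((2:ℝ)⁻¹)^(j+1)) (w j)) ?_
    rw [Real.norm_eq_abs, abs_of_nonneg (by positivity : (0:ℝ) ≤ ((2:ℝ)⁻¹)^(j+1))]
    exact mul_le_mul_of_nonneg_left (Cnorm j _ (wmem j)) (by positivity)
  have hmaj : Summable (fun j : ℕ => ((2:ℝ)⁻¹)^(j+1) * α) := by
    have : Summable (fun j : ℕ => ((2:ℝ)⁻¹)^j) :=
      summable_geometric_of_lt_one (by norm_num) (by norm_num)
    simpa [pow_succ, mul_comm, mul_assoc, mul_left_comm] using (this.mul_right ((2:ℝ)⁻¹ * α))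
  have snorm : Summable (fun j => ‖u j‖) :=
    Summable.of_nonneg_of_le (fun j => norm_nonneg _) unorm hmaj
  have summ : Summable u := snorm.of_norm
  set h : C(K, ℝ) := ∑' j, u j with hhdef
  have htail : ∀ k, h - H k = ∑' j, u (j + k) := by
    intro k
    rw [Hsum k, sub_eq_iff_eq_add, add_comm]
    exact (Summable.sum_add_tsum_nat_add k summ).symm
  have tailnorm : ∀ k, ‖h - H k‖ ≤ ((2:ℝ)⁻¹)^k * α := by
    intro k
    rw [htail k]
    calc ‖∑' j, u (j + k)‖ ≤ ∑' j, ‖u (j + k)‖ :=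
          norm_tsum_le_tsum_norm ((summable_nat_add_iff k).mpr snorm)
      _ ≤ ∑' j : ℕ, ((2:ℝ)⁻¹)^(j + k + 1) * α := by
          exact Summable.tsum_le_tsum (fun j => unorm (j + k)) ((summable_nat_add_iff k).mpr snorm)
            ((summable_nat_add_iff k).mpr hmaj)
      _ = ((2:ℝ)⁻¹)^k * α := by
          have : ∀ j : ℕ, ((2:ℝ)⁻¹)^(j + k + 1) * α = (((2:ℝ)⁻¹)^(k+1) * α) * ((2:ℝ)⁻¹)^j := by
            intro j; ring
          rw [tsum_congr this, tsum_mul_left, tsum_geometric_of_lt_one (by norm_num) (by norm_num)]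
          ring_nf
  have taileval : ∀ k (x : K), 0 ≤ (h - H k) x := by
    intro k x
    rw [htail k]
    have : (∑' j, u (j + k)) x = ∑' j, (u (j + k)) x :=
      (ContinuousMap.evalCLM ℝ x).map_tsum ((summable_nat_add_iff k).mpr summ)
    rw [this]
    apply tsum_nonneg
    intro j
    show (0:ℝ) ≤ (((2:ℝ)⁻¹)^(j+k+1) • w (j+k)) x
    simp only [ContinuousMap.coe_smul, Pi.smul_apply, smul_eq_mul]
    have := (Cbound _ _ (wmem (j + k)) x).1
    positivity
  obtain ⟨b, hb⟩ : ∃ b, ∀ x, h x ≤ h b := by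
    obtain ⟨b, -, hb⟩ := isCompact_univ.exists_isMaxOn Set.univ_nonempty h.continuous.continuousOn
    exact ⟨b, fun x => hb (Set.mem_univ x)⟩
  set θ : ℝ := h b with hθ
  have hH0 : H 0 = 0 := rfl
  have hnonneg : ∀ x, 0 ≤ h x := by
    intro x
    have := taileval 0 x
    simpa [hH0] using this
  have cbddBelow : ∀ k, BddBelow ((fun w' => ‖H k + ((2:ℝ)⁻¹)^k • w'‖) '' Cs k) := by
    intro k
    exact ⟨0, by rintro - ⟨w', -, rfl⟩; exact norm_nonneg _⟩
  have Hsucc' : ∀ k, H (k+1) = H k + ((2:ℝ)⁻¹)^(k+1) • w k := fun k => rfl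
  have hθ0 : 0 ≤ θ := hnonneg b
  have hnormh : ‖h‖ ≤ θ := by
    rw [ContinuousMap.norm_le _ hθ0]
    intro x
    rw [Real.norm_eq_abs, abs_of_nonneg (hnonneg x)]
    exact hb x
  -- c k ≤ θ
  have cle : ∀ k, c k ≤ θ := by
    intro k
    have key : ∀ m, k ≤ m → c k ≤ θ + ((2:ℝ)⁻¹)^m * α := by
      intro m hm
      set S : ℕ → C(K, ℝ) := fun i =>
        Nat.rec (w (m+1)) (fun i si => (2:ℝ)⁻¹ • (w (m - i) + si)) i with hSdef
      have Ssucc : ∀ i, S (i+1) = (2:ℝ)⁻¹ • (w (m - i) + S i) := fun i => rfl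
      have claim : ∀ i, i ≤ m + 1 →
          S i ∈ Cs (m+1-i) ∧
          H (m+1-i) + ((2:ℝ)⁻¹)^(m+1-i) • S i
            = H (m+1) + ((2:ℝ)⁻¹)^(m+1) • w (m+1) := by
        intro i
        induction i with
        | zero =>
          intro _
          constructor
          · exact wmem (m+1)
          · simp only [Nat.sub_zero]; rfl
        | succ i ih =>
          intro hi1
          have ih' := ih (by omega)
          have e1 : m + 1 - (i+1) = m - i := by omega
          have e2 : m + 1 - i = (m - i) + 1 := by omega
          constructor
          · rw [e1, Ssucc i, smul_add]
            refine (Cconv (m-i)) (wmem (m-i)) (Cmono (by omega) ih'.1) (by norm_num)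
              (by norm_num) (by norm_num)
          · rw [e1, ← ih'.2, e2, Hsucc' (m - i), Ssucc i]
            module
      obtain ⟨Smem, Sid⟩ := claim (m + 1 - k) (by omega)
      have e4 : m + 1 - (m + 1 - k) = k := by omega
      rw [e4] at Smem Sid
      have h1 : c k ≤ ‖H k + ((2:ℝ)⁻¹)^k • S (m+1-k)‖ :=
        csInf_le (cbddBelow k) ⟨S (m+1-k), Smem, rfl⟩
      rw [Sid] at h1
      have h2 : ‖H (m+1) + ((2:ℝ)⁻¹)^(m+1) • w (m+1)‖ ≤ θ + ((2:ℝ)⁻¹)^m * α := by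
        have e5 : H (m+1) + ((2:ℝ)⁻¹)^(m+1) • w (m+1)
            = h + ((H (m+1) - h) + ((2:ℝ)⁻¹)^(m+1) • w (m+1)) := by abel
        rw [e5]
        refine le_trans (norm_add_le _ _) ?_
        have n2 : ‖(H (m+1) - h) + ((2:ℝ)⁻¹)^(m+1) • w (m+1)‖
            ≤ ((2:ℝ)⁻¹)^(m+1) * α + ((2:ℝ)⁻¹)^(m+1) * α := by
          refine le_trans (norm_add_le _ _) (add_le_add ?_ ?_)
          · rw [norm_sub_rev]
            exact tailnorm (m+1)
          · refine le_trans (norm_smul_le (((2:ℝ)⁻¹)^(m+1)) (w (m+1))) ?_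
            rw [Real.norm_eq_abs, abs_of_nonneg (by positivity : (0:ℝ) ≤ ((2:ℝ)⁻¹)^(m+1))]
            exact mul_le_mul_of_nonneg_left (Cnorm _ _ (wmem (m+1))) (by positivity)
        have e6 : ((2:ℝ)⁻¹)^(m+1) * α + ((2:ℝ)⁻¹)^(m+1) * α = ((2:ℝ)⁻¹)^m * α := by
          ring
        rw [e6] at n2
        linarith [hnormh, n2]
      linarith [h1, h2]
    refine le_of_forall_pos_le_add ?_
    intro δ hδ
    have htend : Tendsto (fun m => ((2:ℝ)⁻¹)^m * α) atTop (𝓝 0) := by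
      simpa using (tendsto_pow_atTop_nhds_zero_of_lt_one (by norm_num : (0:ℝ) ≤ 2⁻¹)
        (by norm_num : (2:ℝ)⁻¹ < 1)).mul_const α
    have hev : ∀ᶠ m in atTop, ((2:ℝ)⁻¹)^m * α < δ := htend.eventually_lt_const hδ
    obtain ⟨m, hm1, hm2⟩ := (hev.and (eventually_ge_atTop k)).exists
    exact le_trans (key m hm2) (by linarith)
  have c0ge : ε ≤ c 0 := by
    apply le_csInf ((Cne 0).image _)
    rintro - ⟨w', hw', rfl⟩
    obtain ⟨x, hx⟩ := hcon w' (Csub 0 hw')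
    have : w' x ≤ ‖w'‖ := ContinuousMap.apply_le_norm w' x
    have e : H 0 + ((2:ℝ)⁻¹)^0 • w' = w' := by simp [hH0]
    show ε ≤ ‖H 0 + ((2:ℝ)⁻¹)^0 • w'‖
    rw [e]
    linarith
  set β : ℕ → ℝ := fun k => (2:ℝ)^k * (θ - H k b) with hβ
  have βnonneg : ∀ k, 0 ≤ β k := by
    intro k
    have := taileval k b
    have e : (h - H k) b = θ - H k b := by simp [hθ]
    rw [e] at this
    positivity
  have βle : ∀ k, β k ≤ α := by
    intro k
    have e : (h - H k) b = θ - H k b := by simp [hθ]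
    have h1 : θ - H k b ≤ ((2:ℝ)⁻¹)^k * α := by
      rw [← e]
      exact le_trans (ContinuousMap.apply_le_norm _ b) (tailnorm k)
    have h2 : (2:ℝ)^k * (((2:ℝ)⁻¹)^k * α) = α := by
      rw [← mul_assoc, ← mul_pow]; norm_num
    calc β k ≤ (2:ℝ)^k * (((2:ℝ)⁻¹)^k * α) :=
          mul_le_mul_of_nonneg_left h1 (by positivity)
      _ = α := h2
  have βsucc : ∀ k, β (k+1) = 2 * β k - w k b := by
    intro k
    have e : H (k+1) b = H k b + ((2:ℝ)⁻¹)^(k+1) * w k b := by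
      rw [Hsucc k]
      simp [hw]
    have h2 : ((2:ℝ))^(k+1) * ((2:ℝ)⁻¹)^(k+1) = 1 := by
      rw [← mul_pow]; norm_num
    show (2:ℝ)^(k+1) * (θ - H (k+1) b) = 2 * ((2:ℝ)^k * (θ - H k b)) - w k b
    rw [e]
    linear_combination (-(w k b)) * h2
  have wkb_le : ∀ k, w k b ≤ β k + (ε/4) * ((2:ℝ)⁻¹)^k := by
    intro k
    have h1 : (H k + ((2:ℝ)⁻¹)^k • w k) b ≤ ‖H k + ((2:ℝ)⁻¹)^k • w k‖ :=
      ContinuousMap.apply_le_norm _ b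
    have h2 : (H k + ((2:ℝ)⁻¹)^k • w k) b = H k b + ((2:ℝ)⁻¹)^k * w k b := by simp
    have h3 : H k b + ((2:ℝ)⁻¹)^k * w k b < θ + (ε/4) * ((4:ℝ)⁻¹)^k := by
      rw [← h2]
      calc (H k + ((2:ℝ)⁻¹)^k • w k) b ≤ ‖H k + ((2:ℝ)⁻¹)^k • w k‖ := h1
        _ < c k + (ε/4) * ((4:ℝ)⁻¹)^k := wlt k
        _ ≤ θ + (ε/4) * ((4:ℝ)⁻¹)^k := by linarith [cle k]
    -- θ - H k b = (2⁻¹)^k * β k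
    have h4 : θ - H k b = ((2:ℝ)⁻¹)^k * β k := by
      rw [hβ]
      simp only
      rw [← mul_assoc, ← mul_pow]
      norm_num
    have h5 : ((2:ℝ)⁻¹)^k * w k b < ((2:ℝ)⁻¹)^k * β k + (ε/4) * ((4:ℝ)⁻¹)^k := by
      linarith
    have h6 : (0:ℝ) < (2:ℝ)^k := by positivity
    have h7 : ((2:ℝ))^k * ((2:ℝ)⁻¹)^k = 1 := by rw [← mul_pow]; norm_num
    have h8 : ((2:ℝ))^k * ((4:ℝ)⁻¹)^k = ((2:ℝ)⁻¹)^k := by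
      rw [← mul_pow]; congr 1; norm_num
    have h9 : (2:ℝ)^k * (((2:ℝ)⁻¹)^k * w k b) < (2:ℝ)^k * (((2:ℝ)⁻¹)^k * β k + (ε/4) * ((4:ℝ)⁻¹)^k) :=
      mul_lt_mul_of_pos_left h5 h6
    have e1 : (2:ℝ)^k * (((2:ℝ)⁻¹)^k * w k b) = w k b := by
      rw [← mul_assoc, h7, one_mul]
    have e2 : (2:ℝ)^k * (((2:ℝ)⁻¹)^k * β k + (ε/4) * ((4:ℝ)⁻¹)^k)
        = β k + (ε/4) * ((2:ℝ)⁻¹)^k := by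
      rw [mul_add, ← mul_assoc, h7, one_mul,
        show (2:ℝ)^k * ((ε/4) * ((4:ℝ)⁻¹)^k) = (ε/4) * ((2:ℝ)^k * ((4:ℝ)⁻¹)^k) from by ring, h8]
    rw [e1, e2] at h9
    exact h9.le
  have βlow : ∀ k, ε/2 + (ε/2) * ((2:ℝ)⁻¹)^k ≤ β k := by
    intro k
    induction k with
    | zero =>
      have : β 0 = θ := by rw [hβ]; simp [hH0]
      rw [this]
      have : ε ≤ θ := le_trans c0ge (cle 0)
      simpa using this
    | succ k ih =>
      have h1 : β (k+1) = 2 * β k - w k b := βsucc k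
      have h2 := wkb_le k
      have h3 : ((2:ℝ)⁻¹)^(k+1) = ((2:ℝ)⁻¹)^k * 2⁻¹ := by ring
      nlinarith
  -- final contradiction
  obtain ⟨K₀, hK₀⟩ : ∃ N, ∀ j ≥ N, f j b < ε/8 := by
    have := (hlim b).eventually_lt_const (show (0:ℝ) < ε/8 by positivity)
    exact eventually_atTop.mp this
  have main : ∃ k ≥ K₀, ε/4 ≤ w k b := by
    by_contra hsmall
    push_neg at hsmall
    have grow : ∀ j : ℕ, (2:ℝ)^j * (ε/4) ≤ β (K₀ + j) - ε/4 := by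
      intro j
      induction j with
      | zero =>
        have := βlow K₀
        have h1 : 0 ≤ (ε/2) * ((2:ℝ)⁻¹)^K₀ := by positivity
        simp only [pow_zero, one_mul, Nat.add_zero]
        linarith
      | succ j ih =>
        have h1 : β (K₀ + j + 1) = 2 * β (K₀ + j) - w (K₀ + j) b := βsucc (K₀ + j)
        have h2 : w (K₀ + j) b < ε/4 := hsmall (K₀ + j) (Nat.le_add_right _ _)
        have h3 : (2:ℝ)^(j+1) = 2 * (2:ℝ)^j := by ring
        have h4 : K₀ + (j + 1) = K₀ + j + 1 := by omega
        rw [h4]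
        nlinarith
    obtain ⟨j, hj⟩ : ∃ j : ℕ, 4 * α / ε < 2 ^ j :=
      pow_unbounded_of_one_lt (4 * α / ε) (by norm_num)
    have h1 := grow j
    have h2 := βle (K₀ + j)
    have h3 : α < (2:ℝ)^j * (ε/4) := by
      rw [div_lt_iff₀ hε] at hj
      nlinarith
    linarith
  obtain ⟨k, hk, hwk⟩ := main
  have hCk : Cs k ⊆ {g : C(K,ℝ) | g b ≤ ε/8} := by
    refine Set.Subset.trans (Cmono hk) (convexHull_min ?_ ?_)
    · rintro - ⟨j, hj, rfl⟩
      exact le_of_lt (hK₀ j hj)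
    · intro g₁ hg₁ g₂ hg₂ a b' ha hb' hab
      simp only [Set.mem_setOf_eq, ContinuousMap.add_apply, ContinuousMap.coe_smul,
        Pi.smul_apply, smul_eq_mul] at *
      nlinarith
  have := hCk (wmem k)
  simp only [Set.mem_setOf_eq] at this
  linarith
end

section
/- Let K be a compact topological space and let Φ be an arbitrary continuous linear functional on C(K) (not assumed positive). Let (gₙ) be a sequence in C(K) with |gₙ(x)| ≤ α for all x ∈ K and all n, for some finite constant α, such that gₙ(x) → 0 for every x ∈ K. Then Φ gₙ → 0 as n → ∞. -/
open Filter Topology MeasureTheory TopologicalSpace Set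

section Pos

variable {K : Type*} [TopologicalSpace K] [CompactSpace K] [T2Space K]

set_option maxHeartbeats 1000000 in
/-- A positive additive functional on `C(K,ℝ)` (K compact Hausdorff) sends bounded
pointwise-null sequences to null sequences. -/
theorem pos_functional_tendsto (Λ : C(K, ℝ) → ℝ)
    (hadd : ∀ f g : C(K, ℝ), Λ (f + g) = Λ f + Λ g)
    (hsmul : ∀ (c : ℝ) (f : C(K, ℝ)), 0 ≤ c → Λ (c • f) = c * Λ f)
    (hpos : ∀ f : C(K, ℝ), 0 ≤ f → 0 ≤ Λ f)
    (g : ℕ → C(K, ℝ)) (α : ℝ) (hgα : ∀ n x, |g n x| ≤ α)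
    (hlim : ∀ x, Tendsto (fun n => g n x) atTop (𝓝 0)) :
    Tendsto (fun n => Λ (g n)) atTop (𝓝 0) := by
  classical
  have hΛ0 : Λ 0 = 0 := by
    have := hsmul 0 0 le_rfl
    simpa using this
  -- monotonicity
  have hmono : ∀ f₁ f₂ : C(K, ℝ), f₁ ≤ f₂ → Λ f₁ ≤ Λ f₂ := by
    intro f₁ f₂ h
    have h2 : (0 : C(K, ℝ)) ≤ f₂ - f₁ := by
      rw [ContinuousMap.le_def] at h ⊢
      intro x; simpa using h x
    have : Λ f₂ = Λ f₁ + Λ (f₂ - f₁) := by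
      rw [← hadd]; congr 1; abel
    have := hpos _ h2
    linarith
  -- sums
  have hΛsum : ∀ (n : ℕ) (F : ℕ → C(K, ℝ)),
      Λ (∑ i ∈ Finset.range n, F i) = ∑ i ∈ Finset.range n, Λ (F i) := by
    intro n F
    induction n with
    | zero => simpa using hΛ0
    | succ n ih => rw [Finset.sum_range_succ, Finset.sum_range_succ, hadd, ih]
  -- the content
  set S : Set K → Set ℝ :=
    fun C => {r | ∃ φ : C(K, ℝ), 0 ≤ φ ∧ (∀ x ∈ C, 1 ≤ φ x) ∧ Λ φ = r} with hS
  set ct : Set K → ℝ := fun C => sInf (S C) with hct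
  have hSne : ∀ C : Set K, (S C).Nonempty := by
    intro C
    exact ⟨Λ 1, 1, by rw [ContinuousMap.le_def]; intro x; simp, fun x _ => by simp, rfl⟩
  have hSbdd : ∀ C : Set K, BddBelow (S C) := by
    intro C
    refine ⟨0, ?_⟩
    rintro r ⟨φ, hφ0, -, rfl⟩
    exact hpos φ hφ0
  have hct0 : ∀ C : Set K, 0 ≤ ct C := by
    intro C
    refine le_csInf (hSne C) ?_
    rintro r ⟨φ, hφ0, -, rfl⟩
    exact hpos φ hφ0
  have hct_le : ∀ (C : Set K) (φ : C(K, ℝ)), 0 ≤ φ → (∀ x ∈ C, 1 ≤ φ x) → ct C ≤ Λ φ := by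
    intro C φ h1 h2
    exact csInf_le (hSbdd C) ⟨φ, h1, h2, rfl⟩
  have hct_mono : ∀ C D : Set K, C ⊆ D → ct C ≤ ct D := by
    intro C D hCD
    refine le_csInf (hSne D) ?_
    rintro r ⟨φ, h1, h2, rfl⟩
    exact hct_le C φ h1 (fun x hx => h2 x (hCD hx))
  -- subadditivity
  have hct_subadd : ∀ C D : Set K, ct (C ∪ D) ≤ ct C + ct D := by
    intro C D
    have key : ∀ r₁ ∈ S C, ∀ r₂ ∈ S D, ct (C ∪ D) ≤ r₁ + r₂ := by
      rintro r₁ ⟨φ₁, h10, h11, rfl⟩ r₂ ⟨φ₂, h20, h21, rfl⟩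
      rw [← hadd]
      refine hct_le _ _ ?_ ?_
      · rw [ContinuousMap.le_def] at h10 h20 ⊢
        intro x; have := h10 x; have := h20 x; simp at *; linarith
      · rintro x (hx | hx)
        · have := h11 x hx
          have h2 := (ContinuousMap.le_def.mp h20) x
          simp only [ContinuousMap.add_apply]
          simp at h2; linarith
        · have := h21 x hx
          have h1 := (ContinuousMap.le_def.mp h10) x
          simp only [ContinuousMap.add_apply]
          simp at h1; linarith
    have step : ∀ r₂ ∈ S D, ct (C ∪ D) - r₂ ≤ ct C := by
      intro r₂ hr₂
      refine le_csInf (hSne C) ?_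
      intro r₁ hr₁
      have := key r₁ hr₁ r₂ hr₂
      linarith
    have : ct (C ∪ D) - ct C ≤ ct D := by
      refine le_csInf (hSne D) ?_
      intro r₂ hr₂
      have := step r₂ hr₂
      linarith
    linarith
  -- superadditivity on disjoint closed sets
  have hct_superadd : ∀ C D : Set K, IsClosed C → IsClosed D → Disjoint C D →
      ct C + ct D ≤ ct (C ∪ D) := by
    intro C D hC hD hdis
    obtain ⟨u, hu0, hu1, hu01⟩ := exists_continuous_zero_one_of_isClosed hC hD hdis
    refine le_csInf (hSne _) ?_
    rintro r ⟨φ, h0, h1, rfl⟩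
    have hφ := ContinuousMap.le_def.mp h0
    -- split φ = φ*(1-u) + φ*u
    have hsplit : φ * ((1 : C(K, ℝ)) - u) + φ * u = φ := by
      ext x; simp; ring
    have e1 : ct C ≤ Λ (φ * ((1 : C(K, ℝ)) - u)) := by
      refine hct_le _ _ ?_ ?_
      · rw [ContinuousMap.le_def]
        intro x
        have := hφ x; have h2 := (hu01 x).2
        simp at *
        nlinarith
      · intro x hx
        have := h1 x (Or.inl hx)
        have := hu0 hx
        simp_all
    have e2 : ct D ≤ Λ (φ * u) := by
      refine hct_le _ _ ?_ ?_
      · rw [ContinuousMap.le_def]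
        intro x
        have := hφ x; have h2 := (hu01 x).1
        simp at *
        nlinarith
      · intro x hx
        have := h1 x (Or.inr hx)
        have := hu1 hx
        simp_all
    calc ct C + ct D ≤ Λ (φ * ((1 : C(K, ℝ)) - u)) + Λ (φ * u) := add_le_add e1 e2
      _ = Λ φ := by rw [← hadd, hsplit]
  -- bundle into a content
  let cont : Content K :=
    { toFun := fun C => ⟨ct C, hct0 C⟩
      mono' := fun C₁ C₂ h => by
        refine NNReal.coe_le_coe.mp ?_
        exact hct_mono _ _ h
      sup_disjoint' := by
        intro C₁ C₂ hdis h1 h2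
        refine NNReal.eq ?_
        show ct _ = ct _ + ct _
        refine le_antisymm ?_ ?_
        · simpa [Compacts.coe_sup] using hct_subadd C₁ C₂
        · simpa [Compacts.coe_sup] using hct_superadd C₁ C₂ h1 h2 hdis
      sup_le' := by
        intro C₁ C₂
        refine NNReal.coe_le_coe.mp ?_
        show ct _ ≤ ct _ + ct _
        simpa [Compacts.coe_sup] using hct_subadd C₁ C₂ }
  letI : MeasurableSpace K := borel K
  haveI : BorelSpace K := ⟨rfl⟩
  set μ : Measure K := cont.measure with hμ
  have hμuniv : μ Set.univ ≤ (ENNReal.ofNNReal ⟨ct Set.univ, hct0 _⟩) := by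
    rw [hμ, cont.measure_apply MeasurableSet.univ]
    have h1 : cont.outerMeasure (Set.univ : Set K)
        = cont.innerContent ⟨Set.univ, isOpen_univ⟩ :=
      cont.outerMeasure_opens ⟨Set.univ, isOpen_univ⟩
    rw [h1]
    exact cont.innerContent_le ⟨Set.univ, isOpen_univ⟩ ⟨Set.univ, isCompact_univ⟩ subset_rfl
  haveI hfin : IsFiniteMeasure μ :=
    ⟨lt_of_le_of_lt hμuniv ENNReal.coe_lt_top⟩
  -- the content is dominated by the measure on compacts
  have hcm : ∀ C : Set K, IsCompact C → ct C ≤ (μ C).toReal := by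
    intro C hC
    have h1 : (ENNReal.ofNNReal ⟨ct C, hct0 C⟩) ≤ μ C := by
      rw [hμ, cont.measure_apply hC.isClosed.measurableSet]
      exact cont.le_outerMeasure_compacts ⟨C, hC⟩
    have h2 := ENNReal.toReal_mono (measure_ne_top μ C) h1
    exact h2
  have hint : ∀ h : C(K, ℝ), Integrable (fun x => h x) μ :=
    fun h => (map_continuous h).integrable_of_hasCompactSupport
      (HasCompactSupport.of_compactSpace _)
  -- the key inequality : Λ f ≤ ∫ f dμ for 0 ≤ f
  have key : ∀ f : C(K, ℝ), 0 ≤ f → Λ f ≤ ∫ x, f x ∂μ := by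
    intro f hf
    have hfx := ContinuousMap.le_def.mp hf
    refine le_of_forall_pos_le_add ?_
    intro ε hε
    set B : ℝ := ct Set.univ + 1 with hB
    have hBpos : 0 < B := by have := hct0 (Set.univ : Set K); simp [hB]; linarith
    set Δ : ℝ := ε / B with hΔ
    have hΔpos : 0 < Δ := div_pos hε hBpos
    set m : ℕ := ⌈‖f‖ / Δ⌉₊ with hm
    have hmΔ : ‖f‖ ≤ m * Δ := by
      rw [hm]
      have := Nat.le_ceil (‖f‖ / Δ)
      calc ‖f‖ = ‖f‖ / Δ * Δ := by field_simp
        _ ≤ (⌈‖f‖ / Δ⌉₊ : ℝ) * Δ := by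
            apply mul_le_mul_of_nonneg_right this hΔpos.le
    -- truncations
    set h : ℕ → C(K, ℝ) := fun i =>
      ⟨fun x => min (f x) (i * Δ), (map_continuous f).min continuous_const⟩ with hh
    have happ : ∀ i x, h i x = min (f x) (i * Δ) := fun i x => rfl
    have h0 : h 0 = 0 := by
      ext x
      simp [happ, min_eq_right (by simpa using hfx x : (0:ℝ) ≤ f x)]
    have hmf : h m = f := by
      ext x
      have : f x ≤ m * Δ := le_trans (le_trans (le_abs_self _)
        (f.norm_coe_le_norm x)) hmΔ
      simp [happ, min_eq_left this]
    set C : ℕ → Set K := fun i => {x | (i : ℝ) * Δ ≤ f x} with hC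
    have hCcpt : ∀ i, IsCompact (C i) := by
      intro i
      have : IsClosed (C i) :=
        isClosed_le continuous_const (map_continuous f)
      exact this.isCompact
    -- single step estimate
    have step : ∀ i : ℕ, Λ (h (i + 1) - h i) ≤ Δ * ct (C i) := by
      intro i
      have hb : ∀ φ : C(K, ℝ), 0 ≤ φ → (∀ x ∈ C i, 1 ≤ φ x) →
          Λ (h (i + 1) - h i) ≤ Δ * Λ φ := by
        intro φ h1 h2
        rw [← hsmul Δ φ hΔpos.le]
        apply hmono
        rw [ContinuousMap.le_def]
        intro x
        have hφx := ContinuousMap.le_def.mp h1 x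
        simp only [ContinuousMap.sub_apply, ContinuousMap.smul_apply, smul_eq_mul, happ]
        rcases le_or_gt ((i : ℝ) * Δ) (f x) with hcase | hcase
        · have hx1 : (1 : ℝ) ≤ φ x := h2 x hcase
          have : min (f x) ((i + 1 : ℕ) * Δ) ≤ (i : ℝ) * Δ + Δ := by
            apply le_trans (min_le_right _ _)
            push_cast; ring_nf; exact le_rfl
          have hmin : min (f x) ((i : ℝ) * Δ) = (i : ℝ) * Δ := min_eq_right hcase
          rw [hmin] at *
          nlinarith
        · have h1' : min (f x) ((i + 1 : ℕ) * Δ) = f x := by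
            apply min_eq_left
            push_cast
            nlinarith [hΔpos]
          have h2' : min (f x) ((i : ℝ) * Δ) = f x := min_eq_left hcase.le
          rw [h1', h2']
          simp at hφx ⊢
          nlinarith
      -- pass to inf
      have : Λ (h (i + 1) - h i) / Δ ≤ ct (C i) := by
        refine le_csInf (hSne _) ?_
        rintro r ⟨φ, h1, h2, rfl⟩
        rw [div_le_iff₀ hΔpos]
        rw [mul_comm]
        exact hb φ h1 h2
      calc Λ (h (i + 1) - h i) = Δ * (Λ (h (i + 1) - h i) / Δ) := by field_simp
        _ ≤ Δ * ct (C i) := by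
            exact mul_le_mul_of_nonneg_left this hΔpos.le
    -- assemble
    have htel : f = ∑ i ∈ Finset.range (m + 1), (h (i + 1) - h i) := by
      rw [Finset.sum_range_sub (fun i => h i) (m + 1), h0, sub_zero]
      ext x
      have hfxle : f x ≤ ((m : ℝ) + 1) * Δ := by
        have := le_trans (le_trans (le_abs_self _) (f.norm_coe_le_norm x)) hmΔ
        nlinarith
      rw [happ, min_eq_left (by push_cast; exact hfxle : f x ≤ ((m + 1 : ℕ) : ℝ) * Δ)]
    have hsum1 : Λ f ≤ ∑ i ∈ Finset.range (m + 1), (Δ * ct (C i)) := by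
      conv_lhs => rw [htel]
      rw [hΛsum]
      exact Finset.sum_le_sum (fun i _ => step i)
    have hsum2 : ∑ i ∈ Finset.range (m + 1), (Δ * ct (C i))
        = Δ * ct (C 0) + ∑ i ∈ Finset.range m, (Δ * ct (C (i + 1))) := by
      rw [Finset.sum_range_succ' (fun i => Δ * ct (C i)) m]
      ring
    have hsum3 : ∑ i ∈ Finset.range m, (Δ * ct (C (i + 1)))
        ≤ ∑ i ∈ Finset.range m, (Δ * (μ (C (i + 1))).toReal) := by
      refine Finset.sum_le_sum (fun i _ => ?_)
      exact mul_le_mul_of_nonneg_left (hcm _ (hCcpt _)) hΔpos.le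
    have hind : ∀ i : ℕ, Integrable ((C (i + 1)).indicator (fun _ => Δ)) μ :=
      fun i => (integrable_const Δ).indicator (hCcpt (i + 1)).isClosed.measurableSet
    have hsum4 : ∑ i ∈ Finset.range m, (Δ * (μ (C (i + 1))).toReal)
        = ∫ x, (∑ i ∈ Finset.range m, (C (i + 1)).indicator (fun _ => Δ) x) ∂μ := by
      rw [integral_finset_sum _ (fun i _ => hind i)]
      refine Finset.sum_congr rfl (fun i _ => ?_)
      rw [integral_indicator_const Δ (hCcpt (i + 1)).isClosed.measurableSet,
        smul_eq_mul, mul_comm, measureReal_def]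
    have hptwise : ∀ x, (∑ i ∈ Finset.range m, (C (i + 1)).indicator (fun _ => Δ) x)
        ≤ f x := by
      intro x
      have hle : ∀ i ∈ Finset.range m,
          (C (i + 1)).indicator (fun _ => Δ) x ≤ h (i + 1) x - h i x := by
        intro i _
        by_cases hx : x ∈ C (i + 1)
        · rw [Set.indicator_of_mem hx]
          have hfx1 : ((i : ℝ) + 1) * Δ ≤ f x := by
            have := hx
            simp only [hC, Set.mem_setOf_eq] at this
            push_cast at this
            linarith
          have e1 : h (i + 1) x = ((i + 1 : ℕ) : ℝ) * Δ := by
            rw [happ]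
            exact min_eq_right (by push_cast; linarith)
          have e2 : h i x = (i : ℝ) * Δ := by
            rw [happ]
            exact min_eq_right (by nlinarith)
          rw [e1, e2]; push_cast; linarith
        · rw [Set.indicator_of_notMem hx, sub_nonneg, happ, happ]
          exact min_le_min le_rfl (by push_cast; nlinarith)
      calc (∑ i ∈ Finset.range m, (C (i + 1)).indicator (fun _ => Δ) x)
          ≤ ∑ i ∈ Finset.range m, (h (i + 1) x - h i x) := Finset.sum_le_sum hle
        _ = h m x - h 0 x := Finset.sum_range_sub (fun i => h i x) m
        _ ≤ f x := by
            rw [h0]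
            simp [happ, min_le_left]
    have hsum5 : ∫ x, (∑ i ∈ Finset.range m, (C (i + 1)).indicator (fun _ => Δ) x) ∂μ
        ≤ ∫ x, f x ∂μ := by
      refine integral_mono (integrable_finset_sum _ (fun i _ => hind i)) (hint f) ?_
      intro x
      exact hptwise x
    have hΔB : Δ * ct (C 0) ≤ ε := by
      have h1 : ct (C 0) ≤ ct Set.univ := hct_mono _ _ (Set.subset_univ _)
      have h2 : ct Set.univ ≤ B := by simp [hB]
      calc Δ * ct (C 0) ≤ Δ * B := by nlinarith [hct0 (C 0)]
        _ = ε := by rw [hΔ]; field_simp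
    calc Λ f ≤ Δ * ct (C 0) + ∑ i ∈ Finset.range m, (Δ * ct (C (i + 1))) := by
          rw [← hsum2]; exact hsum1
      _ ≤ ε + ∫ x, f x ∂μ := by
          have := le_trans hsum3 (le_of_eq hsum4)
          have := le_trans this hsum5
          linarith
      _ = ∫ x, f x ∂μ + ε := by ring
  -- conclusion via dominated convergence
  set A : ℕ → C(K, ℝ) := fun n =>
    ⟨fun x => |g n x|, (map_continuous (g n)).abs⟩ with hA
  have hAapp : ∀ n x, A n x = |g n x| := fun n x => rfl
  have hA0 : ∀ n, (0 : C(K, ℝ)) ≤ A n := by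
    intro n
    rw [ContinuousMap.le_def]
    intro x
    rw [hAapp]
    simpa using abs_nonneg (g n x)
  have habs : ∀ n, |Λ (g n)| ≤ ∫ x, |g n x| ∂μ := by
    intro n
    have h1 : Λ (g n) ≤ Λ (A n) := by
      apply hmono
      rw [ContinuousMap.le_def]
      intro x
      rw [hAapp]
      exact le_abs_self _
    have h2 : Λ (-(g n)) ≤ Λ (A n) := by
      apply hmono
      rw [ContinuousMap.le_def]
      intro x
      rw [hAapp]
      simpa using neg_le_abs (g n x)
    have hneg : Λ (-(g n)) = -Λ (g n) := by
      have := hadd (g n) (-(g n))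
      simp at this
      linarith [hΛ0 ▸ this]
    have h3 : Λ (A n) ≤ ∫ x, |g n x| ∂μ := key (A n) (hA0 n)
    rw [hneg] at h2
    rw [abs_le]
    constructor <;> linarith
  have hI : Tendsto (fun n => ∫ x, |g n x| ∂μ) atTop (𝓝 0) := by
    have := tendsto_integral_of_dominated_convergence (μ := μ)
      (F := fun n x => |g n x|) (f := fun _ => (0 : ℝ)) (bound := fun _ => α)
      (fun n => ((map_continuous (g n)).abs).aestronglyMeasurable)
      (integrable_const α)
      (fun n => Eventually.of_forall (fun x => by
        simpa [Real.norm_eq_abs, abs_abs] using hgα n x))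
      (Eventually.of_forall (fun x => by
        simpa using (hlim x).abs))
    simpa using this
  exact squeeze_zero_norm (fun n => by simpa [Real.norm_eq_abs] using habs n) hI

private lemma ptadd_aux (a b : ℝ) :
    max (a + b) 0 + max (-a) 0 + max (-b) 0 = max (-(a + b)) 0 + max a 0 + max b 0 := by
  have h1 := max_zero_sub_max_neg_zero_eq_self (a + b)
  have h2 := max_zero_sub_max_neg_zero_eq_self a
  have h3 := max_zero_sub_max_neg_zero_eq_self b
  linarith

set_option maxHeartbeats 1000000 in
/-- A bounded additive functional on `C(K,ℝ)` (K compact Hausdorff) sends bounded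
pointwise-null sequences to null sequences. -/
theorem bounded_functional_tendsto (Λ : C(K, ℝ) → ℝ)
    (hadd : ∀ f g : C(K, ℝ), Λ (f + g) = Λ f + Λ g)
    (hsmul : ∀ (c : ℝ) (f : C(K, ℝ)), Λ (c • f) = c * Λ f)
    (M : ℝ) (hM : ∀ f : C(K, ℝ), |Λ f| ≤ M * ‖f‖)
    (g : ℕ → C(K, ℝ)) (α : ℝ) (hgα : ∀ n x, |g n x| ≤ α)
    (hlim : ∀ x, Tendsto (fun n => g n x) atTop (𝓝 0)) :
    Tendsto (fun n => Λ (g n)) atTop (𝓝 0) := by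
  classical
  have hΛ0 : Λ 0 = 0 := by
    have := hsmul 0 0
    simpa using this
  set M' : ℝ := max M 0 with hM'
  have hM'0 : 0 ≤ M' := le_max_right _ _
  have hMle : ∀ f : C(K, ℝ), |Λ f| ≤ M' * ‖f‖ :=
    fun f => le_trans (hM f) (mul_le_mul_of_nonneg_right (le_max_left _ _) (norm_nonneg f))
  -- the sets over which we take sup
  set P : C(K, ℝ) → Set ℝ :=
    fun f => {r | ∃ h : C(K, ℝ), 0 ≤ h ∧ h ≤ f ∧ Λ h = r} with hP
  set p : C(K, ℝ) → ℝ := fun f => sSup (P f) with hp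
  have hnorm_le : ∀ h f : C(K, ℝ), 0 ≤ h → h ≤ f → ‖h‖ ≤ ‖f‖ := by
    intro h f h0 hhf
    rw [ContinuousMap.norm_le h (norm_nonneg f)]
    intro x
    have h1 := ContinuousMap.le_def.mp h0 x
    have h2 := ContinuousMap.le_def.mp hhf x
    simp only [ContinuousMap.zero_apply] at h1
    rw [Real.norm_eq_abs, abs_of_nonneg h1]
    exact le_trans h2 (le_trans (le_abs_self _) (f.norm_coe_le_norm x))
  have hPne : ∀ f : C(K, ℝ), 0 ≤ f → (P f).Nonempty :=
    fun f hf => ⟨Λ 0, 0, le_rfl, hf, rfl⟩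
  have hPbdd : ∀ f : C(K, ℝ), BddAbove (P f) := by
    intro f
    refine ⟨M' * ‖f‖, ?_⟩
    rintro r ⟨h, h0, hle, rfl⟩
    calc Λ h ≤ |Λ h| := le_abs_self _
      _ ≤ M' * ‖h‖ := hMle h
      _ ≤ M' * ‖f‖ := mul_le_mul_of_nonneg_left (hnorm_le h f h0 hle) hM'0
  have hp_nonneg : ∀ f : C(K, ℝ), 0 ≤ f → 0 ≤ p f := by
    intro f hf
    have := le_csSup (hPbdd f) (⟨0, le_rfl, hf, rfl⟩ : Λ 0 ∈ P f)
    rwa [hΛ0] at this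
  have hp_ge : ∀ f : C(K, ℝ), 0 ≤ f → Λ f ≤ p f :=
    fun f hf => le_csSup (hPbdd f) ⟨f, hf, le_rfl, rfl⟩
  have hp_zero : p 0 = 0 := by
    refine le_antisymm ?_ (hp_nonneg 0 le_rfl)
    refine csSup_le (hPne 0 le_rfl) ?_
    rintro r ⟨h, h0, hle, rfl⟩
    have : h = 0 := le_antisymm hle h0
    simp [this, hΛ0]
  -- additivity of p on nonnegative functions
  have hp_add : ∀ f₁ f₂ : C(K, ℝ), 0 ≤ f₁ → 0 ≤ f₂ →
      p (f₁ + f₂) = p f₁ + p f₂ := by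
    intro f₁ f₂ hf₁ hf₂
    have hf12 : (0 : C(K, ℝ)) ≤ f₁ + f₂ := by
      rw [ContinuousMap.le_def] at hf₁ hf₂ ⊢
      intro x
      have := hf₁ x; have := hf₂ x
      simp at *
      linarith
    refine le_antisymm ?_ ?_
    · refine csSup_le (hPne _ hf12) ?_
      rintro r ⟨h, h0, hle, rfl⟩
      set h₁ : C(K, ℝ) :=
        ⟨fun x => min (h x) (f₁ x), (map_continuous h).min (map_continuous f₁)⟩ with hh₁
      have h₁app : ∀ x, h₁ x = min (h x) (f₁ x) := fun x => rfl
      set h₂ : C(K, ℝ) := h - h₁ with hh₂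
      have hx0 := fun x => ContinuousMap.le_def.mp h0 x
      have hxle := fun x => ContinuousMap.le_def.mp hle x
      have hx1 := fun x => ContinuousMap.le_def.mp hf₁ x
      have hx2 := fun x => ContinuousMap.le_def.mp hf₂ x
      have h₁mem : Λ h₁ ∈ P f₁ := by
        refine ⟨h₁, ?_, ?_, rfl⟩
        · rw [ContinuousMap.le_def]
          intro x
          have := hx0 x; have := hx1 x
          rw [h₁app]
          simp at *
          constructor <;> linarith
        · rw [ContinuousMap.le_def]
          intro x
          rw [h₁app]
          exact min_le_right _ _
      have h₂mem : Λ h₂ ∈ P f₂ := by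
        refine ⟨h₂, ?_, ?_, rfl⟩
        · rw [ContinuousMap.le_def]
          intro x
          simp only [hh₂, ContinuousMap.sub_apply, h₁app, ContinuousMap.zero_apply]
          have : min (h x) (f₁ x) ≤ h x := min_le_left _ _
          linarith
        · rw [ContinuousMap.le_def]
          intro x
          have h3 := hxle x
          have h4 := hx2 x
          simp only [hh₂, ContinuousMap.sub_apply, h₁app] at *
          rcases le_total (h x) (f₁ x) with hc | hc
          · rw [min_eq_left hc]
            simp at h4 ⊢
            linarith
          · rw [min_eq_right hc]
            simp at h3 ⊢
            linarith
      have : Λ h = Λ h₁ + Λ h₂ := by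
        rw [← hadd]
        congr 1
        rw [hh₂]
        abel
      rw [this]
      exact add_le_add (le_csSup (hPbdd f₁) h₁mem) (le_csSup (hPbdd f₂) h₂mem)
    · have keystep : ∀ r₁ ∈ P f₁, ∀ r₂ ∈ P f₂, r₁ + r₂ ≤ p (f₁ + f₂) := by
        rintro r₁ ⟨h₁, h₁0, h₁le, rfl⟩ r₂ ⟨h₂, h₂0, h₂le, rfl⟩
        have : Λ h₁ + Λ h₂ = Λ (h₁ + h₂) := (hadd h₁ h₂).symm
        rw [this]
        refine le_csSup (hPbdd _) ⟨h₁ + h₂, ?_, ?_, rfl⟩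
        · rw [ContinuousMap.le_def] at h₁0 h₂0 ⊢
          intro x
          have := h₁0 x; have := h₂0 x
          simp at *
          linarith
        · rw [ContinuousMap.le_def] at h₁le h₂le ⊢
          intro x
          have := h₁le x; have := h₂le x
          simp at *
          linarith
      refine le_of_forall_lt ?_
      intro c hc
      -- c < p f₁ + p f₂
      obtain ⟨r₁, hr₁, hr₁'⟩ := exists_lt_of_lt_csSup (hPne f₁ hf₁) (by linarith :
        c - p f₂ < p f₁)
      obtain ⟨r₂, hr₂, hr₂'⟩ := exists_lt_of_lt_csSup (hPne f₂ hf₂) (by linarith :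
        c - r₁ < p f₂)
      have := keystep r₁ hr₁ r₂ hr₂
      linarith
  -- positive homogeneity of p
  have hp_smul_le : ∀ c : ℝ, 0 < c → ∀ f : C(K, ℝ), 0 ≤ f →
      p (c • f) ≤ c * p f := by
    intro c hc f hf
    have hcf : (0 : C(K, ℝ)) ≤ c • f := by
      rw [ContinuousMap.le_def] at hf ⊢
      intro x
      have := hf x
      simp at *
      positivity
    refine csSup_le (hPne _ hcf) ?_
    rintro r ⟨h, h0, hle, rfl⟩
    have key1 : Λ h = c * Λ (c⁻¹ • h) := by
      rw [← hsmul]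
      congr 1
      rw [smul_smul, mul_inv_cancel₀ hc.ne', one_smul]
    have key2 : Λ (c⁻¹ • h) ≤ p f := by
      refine le_csSup (hPbdd f) ⟨c⁻¹ • h, ?_, ?_, rfl⟩
      · rw [ContinuousMap.le_def] at h0 ⊢
        intro x
        have := h0 x
        simp at *
        positivity
      · rw [ContinuousMap.le_def] at hle ⊢
        intro x
        have := hle x
        simp at this ⊢
        rw [inv_mul_le_iff₀ hc]
        exact this
    rw [key1]
    exact mul_le_mul_of_nonneg_left key2 hc.le
  have hp_smul : ∀ c : ℝ, 0 ≤ c → ∀ f : C(K, ℝ), 0 ≤ f →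
      p (c • f) = c * p f := by
    intro c hc f hf
    rcases eq_or_lt_of_le hc with rfl | hc
    · simp [hp_zero]
    · refine le_antisymm (hp_smul_le c hc f hf) ?_
      have hcf : (0 : C(K, ℝ)) ≤ c • f := by
        rw [ContinuousMap.le_def] at hf ⊢
        intro x
        have := hf x
        simp at *
        positivity
      have := hp_smul_le c⁻¹ (inv_pos.mpr hc) (c • f) hcf
      rw [smul_smul, inv_mul_cancel₀ hc.ne', one_smul] at this
      calc c * p f ≤ c * (c⁻¹ * p (c • f)) := mul_le_mul_of_nonneg_left this hc.le
        _ = p (c • f) := by field_simp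
  -- positive and negative parts
  set fp : C(K, ℝ) → C(K, ℝ) := fun f =>
    ⟨fun x => max (f x) 0, (map_continuous f).max continuous_const⟩ with hfp
  have hfp_app : ∀ f x, fp f x = max (f x) 0 := fun f x => rfl
  have hfp_nonneg : ∀ f, (0 : C(K, ℝ)) ≤ fp f := by
    intro f
    rw [ContinuousMap.le_def]
    intro x
    rw [hfp_app]
    simp
  have hfp_sub : ∀ f : C(K, ℝ), fp f - fp (-f) = f := by
    intro f
    ext x
    simp only [ContinuousMap.sub_apply, hfp_app, ContinuousMap.neg_apply]
    have := max_zero_sub_max_neg_zero_eq_self (f x)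
    simpa using this
  set Λp : C(K, ℝ) → ℝ := fun f => p (fp f) - p (fp (-f)) with hΛp
  -- additivity of Λp
  have hΛp_add : ∀ f₁ f₂ : C(K, ℝ), Λp (f₁ + f₂) = Λp f₁ + Λp f₂ := by
    intro f₁ f₂
    have hident : fp (f₁ + f₂) + fp (-f₁) + fp (-f₂)
        = fp (-(f₁ + f₂)) + fp f₁ + fp f₂ := by
      ext x
      simp only [ContinuousMap.add_apply, hfp_app, ContinuousMap.neg_apply]
      exact ptadd_aux (f₁ x) (f₂ x)
    have e1 : p (fp (f₁ + f₂) + fp (-f₁) + fp (-f₂))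
        = p (fp (f₁ + f₂)) + p (fp (-f₁)) + p (fp (-f₂)) := by
      rw [hp_add _ _ (by
        rw [ContinuousMap.le_def]
        intro x
        have h1 := ContinuousMap.le_def.mp (hfp_nonneg (f₁ + f₂)) x
        have h2 := ContinuousMap.le_def.mp (hfp_nonneg (-f₁)) x
        simp at *
        linarith) (hfp_nonneg (-f₂)),
        hp_add _ _ (hfp_nonneg (f₁ + f₂)) (hfp_nonneg (-f₁))]
    have e2 : p (fp (-(f₁ + f₂)) + fp f₁ + fp f₂)
        = p (fp (-(f₁ + f₂))) + p (fp f₁) + p (fp f₂) := by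
      rw [hp_add _ _ (by
        rw [ContinuousMap.le_def]
        intro x
        have h1 := ContinuousMap.le_def.mp (hfp_nonneg (-(f₁ + f₂))) x
        have h2 := ContinuousMap.le_def.mp (hfp_nonneg f₁) x
        simp at *
        linarith) (hfp_nonneg f₂),
        hp_add _ _ (hfp_nonneg (-(f₁ + f₂))) (hfp_nonneg f₁)]
    have e3 : p (fp (f₁ + f₂)) + p (fp (-f₁)) + p (fp (-f₂))
        = p (fp (-(f₁ + f₂))) + p (fp f₁) + p (fp f₂) := by
      rw [← e1, ← e2, hident]
    simp only [hΛp]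
    linarith
  -- homogeneity for nonnegative scalars
  have hΛp_smul : ∀ c : ℝ, 0 ≤ c → ∀ f : C(K, ℝ), Λp (c • f) = c * Λp f := by
    intro c hc f
    have e1 : fp (c • f) = c • fp f := by
      ext x
      simp only [hfp_app, ContinuousMap.smul_apply, smul_eq_mul]
      rw [mul_max_of_nonneg _ _ hc, mul_zero]
    have e2 : fp (-(c • f)) = c • fp (-f) := by
      ext x
      simp only [hfp_app, ContinuousMap.smul_apply, ContinuousMap.neg_apply, smul_eq_mul]
      rw [← mul_neg, mul_max_of_nonneg _ _ hc, mul_zero]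
    simp only [hΛp, e1, e2, hp_smul c hc _ (hfp_nonneg f), hp_smul c hc _ (hfp_nonneg (-f))]
    ring
  -- positivity
  have hΛp_pos : ∀ f : C(K, ℝ), 0 ≤ f → 0 ≤ Λp f := by
    intro f hf
    have e1 : fp f = f := by
      ext x
      rw [hfp_app]
      exact max_eq_left (by simpa using ContinuousMap.le_def.mp hf x)
    have e2 : fp (-f) = 0 := by
      ext x
      simp only [hfp_app, ContinuousMap.neg_apply, ContinuousMap.zero_apply]
      exact max_eq_right (by simpa using ContinuousMap.le_def.mp hf x)
    simp only [hΛp, e1, e2, hp_zero, sub_zero]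
    exact hp_nonneg f hf
  have hΛp_ge : ∀ f : C(K, ℝ), 0 ≤ f → Λ f ≤ Λp f := by
    intro f hf
    have e1 : fp f = f := by
      ext x
      rw [hfp_app]
      exact max_eq_left (by simpa using ContinuousMap.le_def.mp hf x)
    have e2 : fp (-f) = 0 := by
      ext x
      simp only [hfp_app, ContinuousMap.neg_apply, ContinuousMap.zero_apply]
      exact max_eq_right (by simpa using ContinuousMap.le_def.mp hf x)
    simp only [hΛp, e1, e2, hp_zero, sub_zero]
    exact hp_ge f hf
  -- the negative part
  set Λm : C(K, ℝ) → ℝ := fun f => Λp f - Λ f with hΛm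
  have hΛm_add : ∀ f₁ f₂ : C(K, ℝ), Λm (f₁ + f₂) = Λm f₁ + Λm f₂ := by
    intro f₁ f₂
    simp only [hΛm, hΛp_add, hadd]
    ring
  have hΛm_smul : ∀ c : ℝ, 0 ≤ c → ∀ f : C(K, ℝ), Λm (c • f) = c * Λm f := by
    intro c hc f
    simp only [hΛm, hΛp_smul c hc, hsmul]
    ring
  have hΛm_pos : ∀ f : C(K, ℝ), 0 ≤ f → 0 ≤ Λm f := by
    intro f hf
    simp only [hΛm]
    have := hΛp_ge f hf
    linarith
  have t1 := pos_functional_tendsto Λp hΛp_add (fun c f hc => hΛp_smul c hc f)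
    hΛp_pos g α hgα hlim
  have t2 := pos_functional_tendsto Λm hΛm_add (fun c f hc => hΛm_smul c hc f)
    hΛm_pos g α hgα hlim
  have : (fun n => Λ (g n)) = fun n => Λp (g n) - Λm (g n) := by
    funext n
    simp [hΛm]
  rw [this]
  simpa using t1.sub t2

end Pos

theorem stmt_6 {K : Type*} [TopologicalSpace K] [CompactSpace K]
    (Φ : C(K, ℝ) →L[ℝ] ℝ)
    (g : ℕ → C(K, ℝ)) (α : ℝ)
    (hgα : ∀ n x, |g n x| ≤ α)
    (hlim : ∀ x, Tendsto (fun n => g n x) atTop (𝓝 0)) :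
    Tendsto (fun n => Φ (g n)) atTop (𝓝 0) := by
  classical
  -- pass to the largest T2 quotient, which is compact Hausdorff
  haveI : CompactSpace (T2Quotient K) := by
    have h : IsCompact (Set.range (T2Quotient.mk : K → T2Quotient K)) :=
      isCompact_range (T2Quotient.continuous_mk K)
    rw [(T2Quotient.surjective_mk K).range_eq] at h
    exact ⟨h⟩
  set mkC : C(K, T2Quotient K) := ⟨T2Quotient.mk, T2Quotient.continuous_mk K⟩ with hmkC
  set Λ : C(T2Quotient K, ℝ) → ℝ := fun h => Φ (h.comp mkC) with hΛ
  have hadd : ∀ f g : C(T2Quotient K, ℝ), Λ (f + g) = Λ f + Λ g := by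
    intro f g
    simp only [hΛ, ContinuousMap.add_comp, map_add]
  have hsmul : ∀ (c : ℝ) (f : C(T2Quotient K, ℝ)), Λ (c • f) = c * Λ f := by
    intro c f
    simp only [hΛ, ContinuousMap.smul_comp]
    rw [Φ.map_smul, smul_eq_mul]
  have hM : ∀ f : C(T2Quotient K, ℝ), |Λ f| ≤ ‖Φ‖ * ‖f‖ := by
    intro f
    have h1 : |Λ f| ≤ ‖Φ‖ * ‖f.comp mkC‖ := Φ.le_opNorm _
    have h2 : ‖f.comp mkC‖ ≤ ‖f‖ := by
      rw [ContinuousMap.norm_le _ (norm_nonneg f)]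
      intro x
      exact f.norm_coe_le_norm (mkC x)
    exact le_trans h1 (mul_le_mul_of_nonneg_left h2 (norm_nonneg Φ))
  set g' : ℕ → C(T2Quotient K, ℝ) := fun n =>
    ⟨T2Quotient.lift (map_continuous (g n)), T2Quotient.continuous_lift _⟩ with hg'
  have hcomp : ∀ n, (g' n).comp mkC = g n := by
    intro n
    ext x
    exact T2Quotient.lift_mk (map_continuous (g n)) x
  have hgα' : ∀ n y, |g' n y| ≤ α := by
    intro n y
    obtain ⟨x, rfl⟩ := T2Quotient.surjective_mk K y
    have : g' n (T2Quotient.mk x) = g n x := T2Quotient.lift_mk (map_continuous (g n)) x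
    rw [this]
    exact hgα n x
  have hlim' : ∀ y, Tendsto (fun n => g' n y) atTop (𝓝 0) := by
    intro y
    obtain ⟨x, rfl⟩ := T2Quotient.surjective_mk K y
    have : ∀ n, g' n (T2Quotient.mk x) = g n x :=
      fun n => T2Quotient.lift_mk (map_continuous (g n)) x
    simp only [this]
    exact hlim x
  have := bounded_functional_tendsto Λ hadd hsmul ‖Φ‖ hM g' α hgα' hlim'
  have heq : (fun n => Λ (g' n)) = fun n => Φ (g n) := by
    funext n
    simp only [hΛ, hcomp]
  rwa [heq] at this
end

section
/- Let K be a compact topological space and let (gₙ) be a sequence in C(K) with |gₙ(x)| ≤ α for all x ∈ K and all n, for some finite constant α, such that gₙ(x) → 0 for every x ∈ K. Then gₙ → 0 weakly in the Banach space C(K), i.e., Φ gₙ → 0 for every continuous linear functional Φ on C(K). -/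
set_option linter.unusedSectionVars false
set_option maxHeartbeats 1000000

open Filter Topology

private lemma clamp_bounds (a b c : ℝ) (hb : 0 ≤ b) (hc : 0 ≤ c) (h : |a| ≤ b + c) :
    |(a ⊓ b) ⊔ (-b)| ≤ b ∧ |a - ((a ⊓ b) ⊔ (-b))| ≤ c := by
  rw [abs_le] at h
  rcases le_total b a with h1 | h1
  · rw [min_eq_right h1, max_eq_left (neg_le_self hb)]
    constructor
    · rw [abs_of_nonneg hb]
    · rw [abs_le]; constructor <;> linarith
  · rw [min_eq_left h1]
    rcases le_total (-b) a with h2 | h2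
    · rw [max_eq_left h2]
      constructor
      · rw [abs_le]; constructor <;> linarith
      · simpa using hc
    · rw [max_eq_right h2]
      constructor
      · rw [abs_neg, abs_of_nonneg hb]
      · rw [abs_le]; constructor <;> linarith

/-- Dini-type lemma: an antitone sequence of nonnegative continuous functions on a
compact space converging pointwise to zero converges to zero in norm. -/
private lemma dini_zero {K : Type*} [TopologicalSpace K] [CompactSpace K]
    (f : ℕ → C(K, ℝ)) (hanti : Antitone f) (hpos : ∀ N, 0 ≤ f N)
    (hlim : ∀ x, Tendsto (fun N => f N x) atTop (𝓝 0)) :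
    Tendsto (fun N => ‖f N‖) atTop (𝓝 0) := by
  rw [Metric.tendsto_atTop]
  intro ε hε
  have hcov : (Set.univ : Set K) ⊆ ⋃ N, {x | f N x < ε / 2} := by
    intro x _
    have : ∀ᶠ N in atTop, f N x < ε / 2 := (hlim x).eventually_lt_const (by linarith)
    obtain ⟨N, hN⟩ := this.exists
    exact Set.mem_iUnion.mpr ⟨N, hN⟩
  obtain ⟨t, ht⟩ := isCompact_univ.elim_finite_subcover (fun N => {x | f N x < ε / 2})
    (fun N => isOpen_lt (f N).continuous continuous_const) hcov
  refine ⟨t.sup id, fun n hn => ?_⟩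
  have hball : ∀ x, f n x < ε / 2 := by
    intro x
    obtain ⟨N, hNt, hx⟩ := Set.mem_iUnion₂.mp (ht (Set.mem_univ x))
    have hNn : N ≤ n := le_trans (Finset.le_sup (f := id) hNt) hn
    exact lt_of_le_of_lt (ContinuousMap.le_def.mp (hanti hNn) x) hx
  have hnorm : ‖f n‖ ≤ ε / 2 := by
    rw [ContinuousMap.norm_le _ (by linarith)]
    intro x
    rw [Real.norm_eq_abs, abs_of_nonneg (ContinuousMap.le_def.mp (hpos n) x)]
    exact (hball x).le
  rw [Real.dist_eq, sub_zero, abs_of_nonneg (norm_nonneg _)]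
  linarith

section Pos

variable {K : Type*} [TopologicalSpace K] [CompactSpace K]

/-- The "total variation" of `Φ` evaluated at `f ≥ 0`: `sup {Φ h : |h| ≤ f}`. -/
private noncomputable def Pos (Φ : C(K, ℝ) →L[ℝ] ℝ) (f : C(K, ℝ)) : ℝ :=
  sSup ((fun h => Φ h) '' {h | |h| ≤ f})

private lemma Pos_ub (Φ : C(K, ℝ) →L[ℝ] ℝ) (f : C(K, ℝ)) :
    ∀ y ∈ (fun h => Φ h) '' {h | |h| ≤ f}, y ≤ ‖Φ‖ * ‖f‖ := by
  rintro y ⟨h, hh, rfl⟩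
  have hnorm : ‖h‖ ≤ ‖f‖ := by
    rw [ContinuousMap.norm_le _ (norm_nonneg f)]
    intro x
    have h1 : |h x| ≤ f x := by simpa using ContinuousMap.le_def.mp hh x
    calc ‖h x‖ = |h x| := rfl
      _ ≤ f x := h1
      _ ≤ |f x| := le_abs_self _
      _ ≤ ‖f‖ := f.norm_coe_le_norm x
  calc Φ h ≤ ‖Φ h‖ := le_abs_self _
    _ ≤ ‖Φ‖ * ‖h‖ := Φ.le_opNorm h
    _ ≤ ‖Φ‖ * ‖f‖ := mul_le_mul_of_nonneg_left hnorm (norm_nonneg Φ)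

private lemma Pos_bddAbove (Φ : C(K, ℝ) →L[ℝ] ℝ) (f : C(K, ℝ)) :
    BddAbove ((fun h => Φ h) '' {h | |h| ≤ f}) :=
  ⟨‖Φ‖ * ‖f‖, Pos_ub Φ f⟩

private lemma Pos_nonempty (Φ : C(K, ℝ) →L[ℝ] ℝ) {f : C(K, ℝ)} (hf : 0 ≤ f) :
    ((fun h => Φ h) '' {h | |h| ≤ f}).Nonempty :=
  ⟨Φ 0, 0, by simpa using hf, rfl⟩

private lemma le_Pos (Φ : C(K, ℝ) →L[ℝ] ℝ) {f h : C(K, ℝ)} (hh : |h| ≤ f) :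
    Φ h ≤ Pos Φ f :=
  le_csSup (Pos_bddAbove Φ f) ⟨h, hh, rfl⟩

private lemma Pos_nonneg (Φ : C(K, ℝ) →L[ℝ] ℝ) {f : C(K, ℝ)} (hf : 0 ≤ f) :
    0 ≤ Pos Φ f := by
  have := le_Pos Φ (f := f) (h := 0) (by simpa using hf)
  simpa using this

private lemma Pos_le_opNorm (Φ : C(K, ℝ) →L[ℝ] ℝ) {f : C(K, ℝ)} (hf : 0 ≤ f) :
    Pos Φ f ≤ ‖Φ‖ * ‖f‖ :=
  csSup_le (Pos_nonempty Φ hf) (Pos_ub Φ f)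

private lemma Pos_mono (Φ : C(K, ℝ) →L[ℝ] ℝ) {f f' : C(K, ℝ)} (hf : 0 ≤ f)
    (hff' : f ≤ f') : Pos Φ f ≤ Pos Φ f' := by
  refine csSup_le (Pos_nonempty Φ hf) ?_
  rintro y ⟨h, hh, rfl⟩
  exact le_Pos Φ (le_trans hh hff')

private lemma Pos_add (Φ : C(K, ℝ) →L[ℝ] ℝ) {f₁ f₂ : C(K, ℝ)} (hf₁ : 0 ≤ f₁)
    (hf₂ : 0 ≤ f₂) : Pos Φ (f₁ + f₂) = Pos Φ f₁ + Pos Φ f₂ := by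
  have hf12 : (0 : C(K, ℝ)) ≤ f₁ + f₂ := by positivity
  apply le_antisymm
  · refine csSup_le (Pos_nonempty Φ hf12) ?_
    rintro y ⟨h, hh, rfl⟩
    set h₁ : C(K, ℝ) := (h ⊓ f₁) ⊔ (-f₁) with hh₁def
    have key : ∀ x, |h₁ x| ≤ f₁ x ∧ |h x - h₁ x| ≤ f₂ x := by
      intro x
      have hb : (0 : ℝ) ≤ f₁ x := ContinuousMap.le_def.mp hf₁ x
      have hc : (0 : ℝ) ≤ f₂ x := ContinuousMap.le_def.mp hf₂ x
      have habs : |h x| ≤ f₁ x + f₂ x := by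
        simpa using ContinuousMap.le_def.mp hh x
      have := clamp_bounds (h x) (f₁ x) (f₂ x) hb hc habs
      simpa [hh₁def] using this
    have m₁ : |h₁| ≤ f₁ := ContinuousMap.le_def.mpr fun x => by
      simpa using (key x).1
    have m₂ : |h - h₁| ≤ f₂ := ContinuousMap.le_def.mpr fun x => by
      simpa using (key x).2
    have hsplit : Φ h = Φ h₁ + Φ (h - h₁) := by rw [← map_add]; ring_nf
    show Φ h ≤ _
    rw [hsplit]
    exact add_le_add (le_Pos Φ m₁) (le_Pos Φ m₂)
  · have step : ∀ h₁ : C(K, ℝ), |h₁| ≤ f₁ → Φ h₁ ≤ Pos Φ (f₁ + f₂) - Pos Φ f₂ := by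
      intro h₁ hh₁
      rw [le_sub_iff_add_le]
      have h2 : Pos Φ f₂ ≤ Pos Φ (f₁ + f₂) - Φ h₁ := by
        refine csSup_le (Pos_nonempty Φ hf₂) ?_
        rintro y ⟨h₂, hh₂, rfl⟩
        show Φ h₂ ≤ _
        rw [le_sub_iff_add_le]
        have habs : |h₁ + h₂| ≤ f₁ + f₂ := ContinuousMap.le_def.mpr fun x => by
          have e0 := abs_add_le (h₁ x) (h₂ x)
          have e1 : |h₁ x| ≤ f₁ x := by simpa using ContinuousMap.le_def.mp hh₁ x
          have e2 : |h₂ x| ≤ f₂ x := by simpa using ContinuousMap.le_def.mp hh₂ x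
          simp only [ContinuousMap.abs_apply, ContinuousMap.add_apply]
          calc |h₁ x + h₂ x| ≤ |h₁ x| + |h₂ x| := e0
            _ ≤ f₁ x + f₂ x := add_le_add e1 e2
        have := le_Pos Φ habs
        rw [map_add] at this
        linarith
      linarith
    have h1 : Pos Φ f₁ ≤ Pos Φ (f₁ + f₂) - Pos Φ f₂ := by
      refine csSup_le (Pos_nonempty Φ hf₁) ?_
      rintro y ⟨h₁, hh₁, rfl⟩
      exact step h₁ hh₁
    linarith

end Pos

theorem stmt_7 {K : Type*} [TopologicalSpace K] [CompactSpace K]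
    (g : ℕ → C(K, ℝ)) (α : ℝ)
    (hgα : ∀ n x, |g n x| ≤ α)
    (hlim : ∀ x, Tendsto (fun n => g n x) atTop (𝓝 0)) :
    ∀ Φ : C(K, ℝ) →L[ℝ] ℝ, Tendsto (fun n => Φ (g n)) atTop (𝓝 0) := by
  intro Φ
  rcases isEmpty_or_nonempty K with hK | hK
  · have hg : ∀ n, g n = 0 := fun n => by
      ext x
      exact (hK.false x).elim
    have heq : (fun n => Φ (g n)) = fun _ => (0 : ℝ) := by
      funext n
      rw [hg n, map_zero]
    rw [heq]
    exact tendsto_const_nhds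
  · have hα : 0 ≤ α := le_trans (abs_nonneg _) (hgα 0 (Classical.arbitrary K))
    set u : ℕ → C(K, ℝ) := fun n => |g n| with hu
    have huapp : ∀ n x, u n x = |g n x| := fun n x => by simp [hu]
    have hu0 : ∀ n, (0 : C(K, ℝ)) ≤ u n := fun n =>
      ContinuousMap.le_def.mpr fun x => by simp [huapp, abs_nonneg]
    have huα : ∀ n, u n ≤ ContinuousMap.const K α := fun n =>
      ContinuousMap.le_def.mpr fun x => by simp [huapp, hgα n x]
    have hulim : ∀ x, Tendsto (fun n => u n x) atTop (𝓝 0) := fun x => by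
      simpa [huapp, abs_zero] using (hlim x).abs
    -- the running maxima `v n m = max_{n ≤ k ≤ n+m} u k`
    set v : ℕ → ℕ → C(K, ℝ) :=
      fun n m => (Finset.range (m + 1)).sup' (by simp) (fun k => u (n + k)) with hv
    have hv_apply : ∀ n m x,
        v n m x = (Finset.range (m + 1)).sup' (by simp) (fun k => u (n + k) x) := by
      intro n m x
      simp [hv, ContinuousMap.sup'_apply]
    have hu_le_v : ∀ n m, u n ≤ v n m := by
      intro n m
      have := Finset.le_sup' (s := Finset.range (m + 1)) (f := fun k => u (n + k))
        (b := 0) (Finset.mem_range.mpr (Nat.succ_pos m))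
      simpa [hv] using this
    have hv0 : ∀ n m, (0 : C(K, ℝ)) ≤ v n m := fun n m => le_trans (hu0 n) (hu_le_v n m)
    have hv_le : ∀ n m, v n m ≤ ContinuousMap.const K α := fun n m =>
      Finset.sup'_le _ _ fun k _ => huα _
    have hv_mono : ∀ n m m', m ≤ m' → v n m ≤ v n m' := by
      intro n m m' hmm
      refine Finset.sup'_le _ _ fun k hk => ?_
      refine Finset.le_sup' (f := fun k => u (n + k)) ?_
      simp only [Finset.mem_range] at hk ⊢
      omega
    have hv_shift : ∀ n m, v (n + 1) m ≤ v n (m + 1) := by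
      intro n m
      refine Finset.sup'_le _ _ fun k hk => ?_
      have he : n + 1 + k = n + (k + 1) := by omega
      rw [he]
      refine Finset.le_sup' (f := fun k => u (n + k)) ?_
      simp only [Finset.mem_range] at hk ⊢
      omega
    -- V n = sup_m Pos Φ (v n m)
    set V : ℕ → ℝ := fun n => ⨆ m, Pos Φ (v n m) with hV
    have hPle : ∀ n m, Pos Φ (v n m) ≤ Pos Φ (ContinuousMap.const K α) := fun n m =>
      Pos_mono Φ (hv0 n m) (hv_le n m)
    have hbddV : ∀ n, BddAbove (Set.range fun m => Pos Φ (v n m)) := fun n =>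
      ⟨_, by rintro y ⟨m, rfl⟩; exact hPle n m⟩
    have hle_V : ∀ n m, Pos Φ (v n m) ≤ V n := fun n m => le_ciSup (hbddV n) m
    have hV0 : ∀ n, 0 ≤ V n := fun n => le_trans (Pos_nonneg Φ (hv0 n 0)) (hle_V n 0)
    have hVanti : Antitone V := antitone_nat_of_succ_le fun n =>
      ciSup_le fun m => le_trans (Pos_mono Φ (hv0 _ m) (hv_shift n m)) (hle_V n (m + 1))
    -- |Φ (g n)| ≤ V n
    have hkey : ∀ n, |Φ (g n)| ≤ V n := by
      intro n
      have habs1 : |g n| ≤ u n := le_of_eq rfl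
      have habs2 : |(-(g n))| ≤ u n := by
        rw [abs_neg]
      have h1 : Φ (g n) ≤ Pos Φ (u n) := le_Pos Φ habs1
      have h2 : -Φ (g n) ≤ Pos Φ (u n) := by
        have := le_Pos Φ habs2
        rwa [map_neg] at this
      have h3 : |Φ (g n)| ≤ Pos Φ (u n) := abs_le.mpr ⟨by linarith, h1⟩
      exact le_trans h3 (le_trans (Pos_mono Φ (hu0 n) (hu_le_v n 0)) (hle_V n 0))
    -- main estimate : V gets arbitrarily small
    have hVsmall : ∀ ε > (0 : ℝ), ∃ N, V N ≤ 3 * ε := by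
      intro ε hε
      have happrox : ∀ n : ℕ, ∃ m, V n - ε * (1 / 2) ^ n < Pos Φ (v n m) := by
        intro n
        have hlt : V n - ε * (1 / 2) ^ n < V n := by
          have : (0 : ℝ) < ε * (1 / 2) ^ n := by positivity
          linarith
        exact exists_lt_of_lt_ciSup hlt
      choose m hm using happrox
      set f : ℕ → C(K, ℝ) :=
        fun N => Nat.rec (v 0 (m 0)) (fun N fN => fN ⊓ v (N + 1) (m (N + 1))) N with hf
      have hf_zero : f 0 = v 0 (m 0) := rfl
      have hf_succ : ∀ N, f (N + 1) = f N ⊓ v (N + 1) (m (N + 1)) := fun N => rfl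
      have hf_pos : ∀ N, (0 : C(K, ℝ)) ≤ f N := by
        intro N
        induction N with
        | zero => exact hv0 0 (m 0)
        | succ N ih => rw [hf_succ]; exact le_inf ih (hv0 _ _)
      have hf_anti : Antitone f := antitone_nat_of_succ_le fun N => by
        rw [hf_succ]; exact inf_le_left
      have hf_le_v : ∀ N, f N ≤ v N (m N) := by
        intro N
        cases N with
        | zero => exact le_of_eq hf_zero
        | succ N => rw [hf_succ]; exact inf_le_right
      have hf_lim : ∀ x, Tendsto (fun N => f N x) atTop (𝓝 0) := by
        intro x
        rw [Metric.tendsto_atTop]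
        intro δ hδ
        obtain ⟨n₀, hn₀⟩ := Metric.tendsto_atTop.mp (hulim x) (δ / 2) (by linarith)
        refine ⟨n₀, fun N hN => ?_⟩
        have h1 : f N x ≤ v N (m N) x := ContinuousMap.le_def.mp (hf_le_v N) x
        have h2 : v N (m N) x ≤ δ / 2 := by
          rw [hv_apply]
          refine Finset.sup'_le _ _ fun k _ => ?_
          have hd := hn₀ (N + k) (le_trans hN (Nat.le_add_right N k))
          rw [Real.dist_eq, sub_zero] at hd
          have hupos : 0 ≤ u (N + k) x := ContinuousMap.le_def.mp (hu0 (N + k)) x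
          rw [abs_of_nonneg hupos] at hd
          linarith
        have h3 : 0 ≤ f N x := ContinuousMap.le_def.mp (hf_pos N) x
        rw [Real.dist_eq, sub_zero, abs_of_nonneg h3]
        linarith
      have hf_norm := dini_zero f hf_anti hf_pos hf_lim
      have hlow : ∀ N, V N - (∑ k ∈ Finset.range (N + 1), ε * (1 / 2) ^ k) ≤ Pos Φ (f N) := by
        intro N
        induction N with
        | zero => simpa [hf_zero] using (hm 0).le
        | succ N ih =>
          have hw := hm (N + 1)
          set w := v (N + 1) (m (N + 1)) with hwdef
          have hsup_le : f N ⊔ w ≤ v N (max (m N) (m (N + 1) + 1)) := by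
            refine sup_le ?_ ?_
            · exact le_trans (hf_le_v N) (hv_mono N _ _ (le_max_left _ _))
            · exact le_trans (hv_shift N (m (N + 1))) (hv_mono N _ _ (le_max_right _ _))
          have hPsup : Pos Φ (f N ⊔ w) ≤ V N :=
            le_trans (Pos_mono Φ (le_trans (hf_pos N) le_sup_left) hsup_le) (hle_V N _)
          have hlat : f N ⊓ w + (f N ⊔ w) = f N + w := by
            ext x
            simp only [ContinuousMap.add_apply, ContinuousMap.inf_apply,
              ContinuousMap.sup_apply]
            exact min_add_max _ _
          have e1 : Pos Φ (f N ⊓ w) + Pos Φ (f N ⊔ w) = Pos Φ (f N) + Pos Φ w := by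
            rw [← Pos_add Φ (le_inf (hf_pos N) (hv0 _ _)) (le_sup_of_le_left (hf_pos N)),
              hlat, Pos_add Φ (hf_pos N) (hv0 _ _)]
          have hsum : (∑ k ∈ Finset.range (N + 2), ε * (1 / 2) ^ k)
              = (∑ k ∈ Finset.range (N + 1), ε * (1 / 2) ^ k) + ε * (1 / 2) ^ (N + 1) :=
            Finset.sum_range_succ _ _
          rw [hf_succ]
          have := hsum
          linarith [hw, ih, hPsup, e1, this]
      have hsum_le : ∀ N, (∑ k ∈ Finset.range (N + 1), ε * (1 / 2) ^ k) ≤ 2 * ε := by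
        intro N
        rw [← Finset.mul_sum]
        have hgeo := sum_geometric_two_le (N + 1)
        nlinarith [hgeo, hε.le]
      have hev : ∀ᶠ N in atTop, ‖Φ‖ * ‖f N‖ < ε := by
        have h2 : Tendsto (fun N => ‖Φ‖ * ‖f N‖) atTop (𝓝 (‖Φ‖ * 0)) := hf_norm.const_mul _
        rw [mul_zero] at h2
        exact h2.eventually_lt_const hε
      obtain ⟨N, hN⟩ := hev.exists
      refine ⟨N, ?_⟩
      have hl := hlow N
      have h3 : Pos Φ (f N) ≤ ‖Φ‖ * ‖f N‖ := Pos_le_opNorm Φ (hf_pos N)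
      have h4 := hsum_le N
      linarith
    have hVlim : Tendsto V atTop (𝓝 0) := by
      rw [Metric.tendsto_atTop]
      intro ε hε
      obtain ⟨N, hN⟩ := hVsmall (ε / 4) (by linarith)
      refine ⟨N, fun n hn => ?_⟩
      rw [Real.dist_eq, sub_zero, abs_of_nonneg (hV0 n)]
      have := hVanti hn
      linarith
    exact squeeze_zero_norm (fun n => by rw [Real.norm_eq_abs]; exact hkey n) hVlim
end

section
/- Let X be a real Banach space and let K ⊆ X be a separable weakly compact subset. Then the closed convex hull of K (the closure in norm of the convex hull of K) is weakly compact. -/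
open Filter Topology Set

set_option linter.unusedSectionVars false
set_option linter.unnecessarySimpa false
set_option maxHeartbeats 1000000

namespace KreinAux


variable {S : Type*} [TopologicalSpace S] [CompactSpace S] [Nonempty S]

lemma zero_le_one_cm : (0 : C(S, ℝ)) ≤ 1 := by intro x; simp

lemma pos_mono {σ : C(S, ℝ) →ₗ[ℝ] ℝ} (hσ : ∀ g, 0 ≤ g → 0 ≤ σ g)
    {g h : C(S, ℝ)} (hgh : g ≤ h) : σ g ≤ σ h := by
  have h1 := hσ (h - g) (by simp [sub_nonneg, hgh])
  have h2 : σ (h - g) = σ h - σ g := map_sub σ h g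
  linarith [h2 ▸ h1]

lemma pos_abs_le {σ : C(S, ℝ) →ₗ[ℝ] ℝ} (hσ : ∀ g, 0 ≤ g → 0 ≤ σ g)
    (g : C(S, ℝ)) : |σ g| ≤ σ 1 * ‖g‖ := by
  have h1 : g ≤ ‖g‖ • (1 : C(S, ℝ)) := by
    intro x
    simpa using le_trans (le_abs_self _) (g.norm_coe_le_norm x)
  have h2 : -(‖g‖ • (1 : C(S, ℝ))) ≤ g := by
    intro x
    simpa using neg_le_of_abs_le (g.norm_coe_le_norm x)
  have b1 : σ g ≤ ‖g‖ * σ 1 := by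
    have := pos_mono hσ h1
    rwa [map_smul, smul_eq_mul] at this
  have b2 : -(‖g‖ * σ 1) ≤ σ g := by
    have := pos_mono hσ h2
    rwa [map_neg, map_smul, smul_eq_mul] at this
  rw [abs_le]
  constructor <;> nlinarith

lemma ext_piece (ρ : C(S, ℝ) →ₗ[ℝ] ℝ) (hρ : ∀ g, 0 ≤ g → 0 ≤ ρ g) (A : Set S) :
    ∃ ψ : C(S, ℝ) →ₗ[ℝ] ℝ,
      (∀ g, 0 ≤ g → 0 ≤ ψ g) ∧
      (∀ g, 0 ≤ g → ψ g ≤ ρ g) ∧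
      (∀ (g : C(S, ℝ)) (c : ℝ), (∀ x ∈ A, g x ≤ c) → ψ g ≤ ψ 1 * c) ∧
      (∀ η : ℝ, 0 < η → ∃ g : C(S, ℝ), 0 ≤ g ∧ (∀ x ∈ A, 1 ≤ g x) ∧ ρ g - ψ g ≤ η) := by
  classical
  set W : C(S, ℝ) → Set ℝ :=
    fun g => ρ '' {h | 0 ≤ h ∧ ∀ x ∈ A, g x ≤ h x} with hW
  have Wne : ∀ g, (W g).Nonempty := by
    intro g
    refine ⟨ρ (ContinuousMap.const S ‖g‖), ⟨ContinuousMap.const S ‖g‖, ⟨?_, ?_⟩, rfl⟩⟩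
    · intro x; simpa using norm_nonneg g
    · intro x _
      simpa using le_trans (le_abs_self _) (g.norm_coe_le_norm x)
  have Wbdd : ∀ g, BddBelow (W g) := by
    rintro g
    exact ⟨0, by rintro r ⟨h, ⟨h0, -⟩, rfl⟩; exact hρ h h0⟩
  set p : C(S, ℝ) → ℝ := fun g => sInf (W g) with hp
  have p_nonneg : ∀ g, 0 ≤ p g := by
    intro g
    refine le_csInf (Wne g) ?_
    rintro r ⟨h, ⟨h0, -⟩, rfl⟩; exact hρ h h0
  have p_le : ∀ (g h : C(S, ℝ)), 0 ≤ h → (∀ x ∈ A, g x ≤ h x) → p g ≤ ρ h := by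
    intro g h h0 hA
    exact csInf_le (Wbdd g) ⟨h, ⟨h0, hA⟩, rfl⟩
  have p_add : ∀ g₁ g₂, p (g₁ + g₂) ≤ p g₁ + p g₂ := by
    intro g₁ g₂
    rw [← sub_le_iff_le_add]
    refine le_csInf (Wne g₁) ?_
    rintro r₁ ⟨h₁, ⟨h₁0, h₁A⟩, rfl⟩
    rw [sub_le_iff_le_add, ← sub_le_iff_le_add']
    refine le_csInf (Wne g₂) ?_
    rintro r₂ ⟨h₂, ⟨h₂0, h₂A⟩, rfl⟩
    rw [sub_le_iff_le_add']
    have : p (g₁ + g₂) ≤ ρ (h₁ + h₂) := by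
      refine p_le _ _ (add_nonneg h₁0 h₂0) ?_
      intro x hx
      simpa using add_le_add (h₁A x hx) (h₂A x hx)
    simpa [map_add] using this
  have p_smul_le : ∀ (c : ℝ), 0 < c → ∀ g, p (c • g) ≤ c * p g := by
    intro c hc g
    rw [mul_comm, ← div_le_iff₀ hc]
    refine le_csInf (Wne g) ?_
    rintro r ⟨h, ⟨h0, hA⟩, rfl⟩
    rw [div_le_iff₀ hc, mul_comm]
    refine le_trans (p_le _ (c • h) (smul_nonneg hc.le h0) ?_) (by rw [map_smul]; rfl)
    intro x hx
    simpa using mul_le_mul_of_nonneg_left (hA x hx) hc.le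
  have p_smul : ∀ (c : ℝ), 0 < c → ∀ g, p (c • g) = c * p g := by
    intro c hc g
    refine le_antisymm (p_smul_le c hc g) ?_
    have h2 := p_smul_le c⁻¹ (by positivity) (c • g)
    rw [smul_smul, inv_mul_cancel₀ hc.ne', one_smul] at h2
    calc c * p g ≤ c * (c⁻¹ * p (c • g)) := by
          exact mul_le_mul_of_nonneg_left h2 hc.le
      _ = p (c • g) := by field_simp
  -- the partial linear map on span of 1
  have hone : ∀ c : ℝ, c • (1 : C(S, ℝ)) = 0 → c • p 1 = 0 := by
    intro c hc
    have := DFunLike.congr_fun hc (Classical.arbitrary S)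
    simp at this
    simp [this]
  set f0 : C(S, ℝ) →ₗ.[ℝ] ℝ := LinearPMap.mkSpanSingleton' (1 : C(S, ℝ)) (p 1) hone with hf0
  have hdom : ∀ x : f0.domain, f0 x ≤ p x := by
    rintro ⟨x, hx⟩
    have hx' : x ∈ Submodule.span ℝ {(1 : C(S, ℝ))} := hx
    obtain ⟨c, hc⟩ := Submodule.mem_span_singleton.mp hx'
    have happ : f0 ⟨c • (1 : C(S, ℝ)), by exact Submodule.smul_mem _ c (Submodule.mem_span_singleton_self _)⟩ = c • p 1 :=
      LinearPMap.mkSpanSingleton'_apply _ _ hone c _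
    have hxeq : (⟨x, hx⟩ : f0.domain) = ⟨c • (1 : C(S, ℝ)), by exact Submodule.smul_mem _ c (Submodule.mem_span_singleton_self _)⟩ :=
      Subtype.ext hc.symm
    rw [hxeq, happ]
    rcases lt_trichotomy c 0 with h | h | h
    · have : (0:ℝ) ≤ p (c • (1 : C(S,ℝ))) := p_nonneg _
      have : c * p 1 ≤ 0 := mul_nonpos_iff.mpr (Or.inr ⟨h.le, p_nonneg 1⟩)
      simp only [smul_eq_mul]
      linarith [p_nonneg (c • (1 : C(S,ℝ)))]
    · subst h; simp [p_nonneg]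
    · simp only [smul_eq_mul]
      rw [p_smul c h 1]
  obtain ⟨ψ, hψeq, hψle⟩ :=
    exists_extension_of_le_sublinear f0 p (fun c hc x => p_smul c hc x) p_add hdom
  have hψ1 : ψ 1 = p 1 := by
    have h1mem : (1 : C(S, ℝ)) ∈ f0.domain := Submodule.mem_span_singleton_self _
    have := hψeq ⟨1, h1mem⟩
    rw [this]
    have happ : f0 ⟨(1:ℝ) • (1 : C(S, ℝ)), by exact Submodule.smul_mem _ _ (Submodule.mem_span_singleton_self _)⟩ = (1:ℝ) • p 1 :=
      LinearPMap.mkSpanSingleton'_apply _ _ hone 1 _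
    have : f0 ⟨1, h1mem⟩ = (1:ℝ) • p 1 := by
      rw [← happ]; congr 1; exact Subtype.ext (one_smul ℝ _).symm
    rw [this]; simp
  -- key domination facts
  have key_le_zero : ∀ g : C(S, ℝ), (∀ x ∈ A, g x ≤ 0) → ψ g ≤ 0 := by
    intro g hg
    refine le_trans (hψle g) (le_trans (p_le g 0 le_rfl ?_) (by simp))
    intro x hx; simpa using hg x hx
  have key_dom : ∀ (g : C(S, ℝ)) (c : ℝ), (∀ x ∈ A, g x ≤ c) → ψ g ≤ ψ 1 * c := by
    intro g c hg
    rcases le_or_gt c 0 with hc | hc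
    · -- write g = (g - c•1) + c•1
      have h1 : ψ (g - c • (1 : C(S, ℝ))) ≤ 0 := by
        refine key_le_zero _ ?_
        intro x hx
        simpa [sub_nonpos] using hg x hx
      have h2 : ψ g = ψ (g - c • (1 : C(S, ℝ))) + c * ψ 1 := by
        rw [map_sub, map_smul]; simp
      rw [h2]
      nlinarith [h1]
    · -- c > 0
      refine le_trans (hψle g) ?_
      rw [hψ1, ← div_le_iff₀ hc]
      refine le_csInf (Wne 1) ?_
      rintro r ⟨h, ⟨h0, hA⟩, rfl⟩
      rw [div_le_iff₀ hc, mul_comm]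
      refine le_trans (p_le g (c • h) (smul_nonneg hc.le h0) ?_) (by rw [map_smul]; rfl)
      intro x hx
      have := hA x hx
      calc g x ≤ c := hg x hx
        _ = c * 1 := by ring
        _ ≤ c * h x := by exact mul_le_mul_of_nonneg_left this hc.le
        _ = (c • h) x := by simp
  refine ⟨ψ, ?_, ?_, key_dom, ?_⟩
  · intro g hg
    have := key_le_zero (-g) (fun x _ => by simpa using hg x)
    rw [map_neg] at this; linarith
  · intro g hg
    exact le_trans (hψle g) (p_le g g hg (fun x _ => le_rfl))
  · intro η hη
    have hlt : sInf (W 1) < p 1 + η := by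
      have : p 1 < p 1 + η := lt_add_of_pos_right _ hη
      exact this
    obtain ⟨r, ⟨h, ⟨h0, hA⟩, rfl⟩, hr⟩ := exists_lt_of_csInf_lt (Wne 1) hlt
    refine ⟨h, h0, fun x hx => by simpa using hA x hx, ?_⟩
    have hlow : ψ 1 ≤ ψ h := by
      have := key_dom (-h) (-1) (fun x hx => by simpa using hA x hx)
      rw [map_neg] at this
      nlinarith [this]
    have : p 1 = ψ 1 := hψ1.symm
    linarith


variable {X : Type*} [NormedAddCommGroup X] [NormedSpace ℝ X] [CompleteSpace X]

lemma approx (ι : S → X) (hι : ∀ f : X →L[ℝ] ℝ, Continuous fun s => f (ι s))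
    (M : ℝ) (d : ℕ → X) (hdM : ∀ n, ‖d n‖ ≤ M)
    (hdense : ∀ (s : S) (ε : ℝ), 0 < ε → ∃ n, ‖ι s - d n‖ < ε)
    (φ : C(S, ℝ) →L[ℝ] ℝ) (hφ : ∀ g, 0 ≤ g → 0 ≤ φ g) (hφ1 : φ 1 = 1)
    (ε : ℝ) (hε : 0 < ε) :
    ∃ x : X, ∀ f : X →L[ℝ] ℝ,
      |f x - φ (ContinuousMap.mk (fun s => f (ι s)) (hι f))| ≤ ‖f‖ * ε := by
  classical
  set A : ℕ → Set S := fun n => {s | ‖ι s - d n‖ ≤ ε} with hA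
  set T := {σ : C(S, ℝ) →ₗ[ℝ] ℝ // ∀ g, 0 ≤ g → 0 ≤ σ g} with hT
  set step : ℕ → T → T := fun n q =>
    ⟨q.1 - (ext_piece q.1 q.2 (A n)).choose, by
      intro g hg
      have hs := (ext_piece q.1 q.2 (A n)).choose_spec
      have := hs.2.1 g hg
      simp only [LinearMap.sub_apply]
      linarith⟩ with hstep
  set ρ : ℕ → T := fun n => Nat.rec ⟨φ.toLinearMap, hφ⟩ step n with hρdef
  set ψ : ℕ → (C(S, ℝ) →ₗ[ℝ] ℝ) := fun n => (ext_piece (ρ n).1 (ρ n).2 (A n)).choose with hψdef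
  have spec := fun n => (ext_piece (ρ n).1 (ρ n).2 (A n)).choose_spec
  have hρ0 : ∀ g, (ρ 0).1 g = φ g := fun g => rfl
  have hρs : ∀ n g, (ρ (n + 1)).1 g = (ρ n).1 g - ψ n g := fun n g => rfl
  have ψpos : ∀ n g, 0 ≤ g → 0 ≤ ψ n g := fun n => (spec n).1
  have ψdom : ∀ n (g : C(S, ℝ)) (c : ℝ), (∀ x ∈ A n, g x ≤ c) → ψ n g ≤ ψ n 1 * c :=
    fun n => (spec n).2.2.1
  have ψres : ∀ n (η : ℝ), 0 < η →
      ∃ g : C(S, ℝ), 0 ≤ g ∧ (∀ x ∈ A n, 1 ≤ g x) ∧ (ρ n).1 g - ψ n g ≤ η :=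
    fun n => (spec n).2.2.2
  set m : ℕ → ℝ := fun n => (ρ n).1 1 with hm
  have hm0 : m 0 = 1 := hφ1
  have hmnonneg : ∀ n, 0 ≤ m n := fun n => (ρ n).2 1 zero_le_one_cm
  have ψ1nonneg : ∀ n, 0 ≤ ψ n 1 := fun n => ψpos n 1 zero_le_one_cm
  have partial_sum : ∀ (g : C(S, ℝ)) (n : ℕ),
      ∑ i ∈ Finset.range n, ψ i g = φ g - (ρ n).1 g := by
    intro g n
    induction n with
    | zero => simp [hρ0]
    | succ n ih => rw [Finset.sum_range_succ, ih, hρs]; ring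
  have hmono : ∀ i n, i ≤ n → ∀ g, 0 ≤ g → (ρ n).1 g ≤ (ρ i).1 g := by
    intro i n hin
    induction n, hin using Nat.le_induction with
    | base => exact fun g _ => le_rfl
    | succ n hin ih =>
      intro g hg
      refine le_trans ?_ (ih g hg)
      rw [hρs]
      linarith [ψpos n g hg]
  -- mass decay
  have hmass : ∀ η : ℝ, 0 < η → ∃ N, ∀ n, N ≤ n → m n ≤ 2 * η := by
    intro η hη
    have hres : ∀ i : ℕ, ∃ g : C(S, ℝ), 0 ≤ g ∧ (∀ x ∈ A i, 1 ≤ g x) ∧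
        (ρ (i + 1)).1 g ≤ η * (1 / 2) ^ (i + 1) := by
      intro i
      obtain ⟨g, hg0, hgA, hgr⟩ := ψres i (η * (1 / 2) ^ (i + 1)) (by positivity)
      exact ⟨g, hg0, hgA, by rw [hρs]; linarith⟩
    choose g hg0 hgA hgr using hres
    set G : ℕ → C(S, ℝ) := fun N => ∑ i ∈ Finset.range N, g i with hG
    have hGapp : ∀ N s, G N s = ∑ i ∈ Finset.range N, g i s := by
      intro N s
      simp [hG]
    have hg0' : ∀ i s, 0 ≤ g i s := fun i s => (hg0 i) s
    have hGmono : ∀ N N', N ≤ N' → ∀ s, G N s ≤ G N' s := by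
      intro N N' h s
      rw [hGapp, hGapp]
      exact Finset.sum_le_sum_of_subset_of_nonneg
        (Finset.range_subset_range.mpr h) (fun i _ _ => hg0' i s)
    have hopen : ∀ N, IsOpen {t : S | (1 : ℝ) / 2 < G N t} :=
      fun N => isOpen_lt continuous_const (G N).continuous
    have hcovers : (univ : Set S) ⊆ ⋃ N, {t : S | (1 : ℝ) / 2 < G N t} := by
      intro s _
      obtain ⟨n, hn⟩ := hdense s ε hε
      refine Set.mem_iUnion.mpr ⟨n + 1, ?_⟩
      have h1 : (1 : ℝ) ≤ g n s := hgA n s (le_of_lt hn)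
      have h2 : g n s ≤ G (n + 1) s := by
        rw [hGapp]
        exact Finset.single_le_sum (fun i _ => hg0' i s) (Finset.self_mem_range_succ n)
      show (1 : ℝ) / 2 < G (n + 1) s
      linarith
    obtain ⟨t, ht⟩ := isCompact_univ.elim_finite_subcover _ hopen hcovers
    refine ⟨t.sup id + 1, ?_⟩
    intro n hn
    have huniv : ∀ s : S, (1 : ℝ) / 2 < G (t.sup id + 1) s := by
      intro s
      have := ht (Set.mem_univ s)
      rw [Set.mem_iUnion₂] at this
      obtain ⟨i, hit, hi⟩ := this
      exact lt_of_lt_of_le hi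
        (hGmono i _ (le_trans (Finset.le_sup (f := id) hit) (Nat.le_succ _)) s)
    have h1 : (1 : C(S, ℝ)) ≤ (2 : ℝ) • G (t.sup id + 1) := by
      intro s
      show (1 : ℝ) ≤ (2 : ℝ) * G (t.sup id + 1) s
      linarith [huniv s]
    have h2 : m n ≤ (ρ n).1 ((2 : ℝ) • G (t.sup id + 1)) := pos_mono (ρ n).2 h1
    have h3 : (ρ n).1 ((2 : ℝ) • G (t.sup id + 1))
        = 2 * ∑ i ∈ Finset.range (t.sup id + 1), (ρ n).1 (g i) := by
      rw [map_smul, smul_eq_mul, hG]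
      rw [map_sum]
    have h4 : ∑ i ∈ Finset.range (t.sup id + 1), (ρ n).1 (g i)
        ≤ ∑ i ∈ Finset.range (t.sup id + 1), η * (1 / 2 : ℝ) ^ (i + 1) := by
      refine Finset.sum_le_sum ?_
      intro i hi
      have hiN : i + 1 ≤ n := le_trans (Finset.mem_range.mp hi) hn
      exact le_trans (hmono (i + 1) n hiN (g i) (hg0 i)) (hgr i)
    have hgeom : ∀ N : ℕ, ∑ i ∈ Finset.range N, (1 / 2 : ℝ) ^ (i + 1) = 1 - (1 / 2) ^ N := by
      intro N
      induction N with
      | zero => simp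
      | succ N ih => rw [Finset.sum_range_succ, ih]; ring
    have h5 : ∑ i ∈ Finset.range (t.sup id + 1), η * (1 / 2 : ℝ) ^ (i + 1) ≤ η := by
      rw [← Finset.mul_sum, hgeom]
      nlinarith [pow_nonneg (by norm_num : (0:ℝ) ≤ 1/2) (t.sup id + 1), hη.le]
    linarith
  -- summability
  have hpartial1 : ∀ n, ∑ i ∈ Finset.range n, ψ i 1 = 1 - m n := by
    intro n
    rw [partial_sum 1 n, hφ1]
  have hsum_le : ∀ n, ∑ i ∈ Finset.range n, ψ i 1 ≤ 1 := by
    intro n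
    rw [hpartial1]
    linarith [hmnonneg n]
  have hsummable1 : Summable (fun i => ψ i 1) := summable_of_sum_range_le ψ1nonneg hsum_le
  have hsummable : Summable (fun i => ψ i 1 • d i) := by
    refine Summable.of_norm_bounded (hsummable1.mul_right M) ?_
    intro i
    rw [norm_smul, Real.norm_eq_abs, abs_of_nonneg (ψ1nonneg i)]
    exact mul_le_mul_of_nonneg_left (hdM i) (ψ1nonneg i)
  refine ⟨∑' i, ψ i 1 • d i, ?_⟩
  intro f
  set gf : C(S, ℝ) := ContinuousMap.mk (fun s => f (ι s)) (hι f) with hgf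
  have hmten : Tendsto m atTop (𝓝 0) := by
    rw [Metric.tendsto_atTop]
    intro δ hδ
    obtain ⟨N, hN⟩ := hmass (δ / 3) (by linarith)
    refine ⟨N, fun n hn => ?_⟩
    rw [Real.dist_eq, sub_zero, abs_of_nonneg (hmnonneg n)]
    linarith [hN n hn]
  have hρten : Tendsto (fun n => (ρ n).1 gf) atTop (𝓝 0) := by
    refine squeeze_zero_norm (fun n => ?_) (by simpa using hmten.mul_const ‖gf‖)
    exact pos_abs_le (ρ n).2 gf
  have hT : Tendsto (fun n => ∑ i ∈ Finset.range n, ψ i gf) atTop (𝓝 (φ gf)) := by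
    have heq : (fun n => ∑ i ∈ Finset.range n, ψ i gf) = fun n => φ gf - (ρ n).1 gf :=
      funext (partial_sum gf)
    rw [heq]
    simpa using tendsto_const_nhds.sub hρten
  have hS : Tendsto (fun n => ∑ i ∈ Finset.range n, ψ i 1 * f (d i)) atTop
      (𝓝 (f (∑' i, ψ i 1 • d i))) := by
    have h2 : HasSum (fun i => f (ψ i 1 • d i)) (f (∑' i, ψ i 1 • d i)) :=
      hsummable.hasSum.mapL f
    simp only [map_smul, smul_eq_mul] at h2
    exact h2.tendsto_sum_nat
  have hterm : ∀ i, |ψ i 1 * f (d i) - ψ i gf| ≤ ψ i 1 * (‖f‖ * ε) := by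
    intro i
    set h : C(S, ℝ) := gf - f (d i) • (1 : C(S, ℝ)) with hh
    have hval : ψ i h = ψ i gf - f (d i) * ψ i 1 := by
      rw [map_sub, map_smul, smul_eq_mul]
    have habs : ∀ s ∈ A i, |f (ι s) - f (d i)| ≤ ‖f‖ * ε := by
      intro s hs
      rw [← map_sub]
      refine le_trans (f.le_opNorm _) ?_
      exact mul_le_mul_of_nonneg_left hs (norm_nonneg f)
    have hup : ψ i h ≤ ψ i 1 * (‖f‖ * ε) := by
      refine ψdom i h (‖f‖ * ε) ?_
      intro s hs
      have hhs : h s = f (ι s) - f (d i) := by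
        simp [hh, hgf]
      rw [hhs]
      exact le_trans (le_abs_self _) (habs s hs)
    have hdown : -(ψ i 1 * (‖f‖ * ε)) ≤ ψ i h := by
      have hneg := ψdom i (-h) (‖f‖ * ε) ?_
      · rw [map_neg] at hneg
        linarith
      · intro s hs
        have hhs : (-h) s = -(f (ι s) - f (d i)) := by
          simp [hh, hgf]
      
        rw [hhs]
        exact le_trans (neg_le_abs _) (habs s hs)
    have hrw : ψ i 1 * f (d i) - ψ i gf = -(ψ i h) := by
      rw [hval]; ring
    rw [hrw, abs_neg, abs_le]
    exact ⟨hdown, hup⟩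
  have hbound : ∀ n, |∑ i ∈ Finset.range n, ψ i 1 * f (d i)
      - ∑ i ∈ Finset.range n, ψ i gf| ≤ ‖f‖ * ε := by
    intro n
    rw [← Finset.sum_sub_distrib]
    refine le_trans (Finset.abs_sum_le_sum_abs _ _) ?_
    refine le_trans (Finset.sum_le_sum (fun i _ => hterm i)) ?_
    rw [← Finset.sum_mul]
    calc (∑ i ∈ Finset.range n, ψ i 1) * (‖f‖ * ε) ≤ 1 * (‖f‖ * ε) :=
          mul_le_mul_of_nonneg_right (hsum_le n) (by positivity)
      _ = ‖f‖ * ε := one_mul _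
  have hdiff : Tendsto (fun n => ∑ i ∈ Finset.range n, ψ i 1 * f (d i)
      - ∑ i ∈ Finset.range n, ψ i gf) atTop (𝓝 (f (∑' i, ψ i 1 • d i) - φ gf)) := hS.sub hT
  exact le_of_tendsto hdiff.abs (Filter.Eventually.of_forall hbound)


lemma star_point (ι : S → X) (hι : ∀ f : X →L[ℝ] ℝ, Continuous fun s => f (ι s))
    (M : ℝ) (d : ℕ → X) (hdM : ∀ n, ‖d n‖ ≤ M)
    (hdense : ∀ (s : S) (ε : ℝ), 0 < ε → ∃ n, ‖ι s - d n‖ < ε)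
    (φ : C(S, ℝ) →L[ℝ] ℝ) (hφ : ∀ g, 0 ≤ g → 0 ≤ φ g) (hφ1 : φ 1 = 1) :
    ∃ x : X, ∀ f : X →L[ℝ] ℝ,
      f x = φ (ContinuousMap.mk (fun s => f (ι s)) (hι f)) := by
  classical
  have happ : ∀ n : ℕ, ∃ x : X, ∀ f : X →L[ℝ] ℝ,
      |f x - φ (ContinuousMap.mk (fun s => f (ι s)) (hι f))| ≤ ‖f‖ * (1 / (n + 1)) :=
    fun n => approx ι hι M d hdM hdense φ hφ hφ1 (1 / (n + 1)) (by positivity)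
  choose y hy using happ
  have hcauchy : CauchySeq y := by
    rw [Metric.cauchySeq_iff']
    intro δ hδ
    obtain ⟨N, hN⟩ := exists_nat_one_div_lt (show (0 : ℝ) < δ / 2 by linarith)
    refine ⟨N, fun n hn => ?_⟩
    rw [dist_eq_norm]
    have hb : ‖y n - y N‖ ≤ 1 / (n + 1) + 1 / (N + 1) := by
      refine NormedSpace.norm_le_dual_bound ℝ _ (by positivity) ?_
      intro f
      have h1 := hy n f
      have h2 := hy N f
      have heq : f (y n - y N)
          = (f (y n) - φ (ContinuousMap.mk (fun s => f (ι s)) (hι f)))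
            - (f (y N) - φ (ContinuousMap.mk (fun s => f (ι s)) (hι f))) := by
        rw [map_sub]; ring
      rw [Real.norm_eq_abs, heq]
      calc |_ - _| ≤ |f (y n) - φ (ContinuousMap.mk (fun s => f (ι s)) (hι f))|
            + |f (y N) - φ (ContinuousMap.mk (fun s => f (ι s)) (hι f))| := abs_sub _ _
        _ ≤ ‖f‖ * (1 / (n + 1)) + ‖f‖ * (1 / (N + 1)) := add_le_add h1 h2
        _ = (1 / (n + 1) + 1 / (N + 1)) * ‖f‖ := by ring
    have hmono : 1 / ((n : ℝ) + 1) ≤ 1 / ((N : ℝ) + 1) := by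
      apply one_div_le_one_div_of_le (by positivity)
      exact_mod_cast Nat.succ_le_succ hn
    calc ‖y n - y N‖ ≤ 1 / (n + 1) + 1 / (N + 1) := hb
      _ ≤ 1 / (N + 1) + 1 / (N + 1) := by linarith
      _ < δ := by linarith [hN]
  obtain ⟨x, hx⟩ := cauchySeq_tendsto_of_complete hcauchy
  refine ⟨x, fun f => ?_⟩
  have t1 : Tendsto (fun n => f (y n)) atTop (𝓝 (f x)) :=
    (f.continuous.tendsto x).comp hx
  have t2 : Tendsto (fun n => f (y n)) atTop
      (𝓝 (φ (ContinuousMap.mk (fun s => f (ι s)) (hι f)))) := by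
    rw [tendsto_iff_dist_tendsto_zero]
    refine squeeze_zero (g := fun n : ℕ => ‖f‖ * (1 / (n + 1))) (fun n => dist_nonneg) (fun n => ?_) ?_
    · show dist (f (y n)) (φ (ContinuousMap.mk (fun s => f (ι s)) (hι f)))
        ≤ ‖f‖ * (1 / (n + 1))
      rw [Real.dist_eq]
      exact hy n f
    · have hten : Tendsto (fun n : ℕ => 1 / ((n : ℝ) + 1)) atTop (𝓝 0) :=
        tendsto_one_div_add_atTop_nhds_zero_nat
      simpa using hten.const_mul ‖f‖
  exact tendsto_nhds_unique t1 t2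


end KreinAux

open KreinAux

theorem stmt_8 {X : Type*} [NormedAddCommGroup X] [NormedSpace ℝ X] [CompleteSpace X]
    (K : Set X)
    (hsep : TopologicalSpace.IsSeparable K)
    (hK : IsCompact (toWeakSpace ℝ X '' K)) :
    IsCompact (toWeakSpace ℝ X '' closure (convexHull ℝ K)) := by
  classical
  rcases K.eq_empty_or_nonempty with rfl | hne
  · simp [convexHull_empty]
  haveI hT2 : T2Space (WeakSpace ℝ X) := by
    refine ⟨fun x y hxy => ?_⟩
    have hz : (toWeakSpace ℝ X).symm x - (toWeakSpace ℝ X).symm y ≠ 0 := by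
      intro h
      rw [sub_eq_zero] at h
      exact hxy ((toWeakSpace ℝ X).symm.injective h)
    obtain ⟨f, -, hf⟩ := exists_dual_vector ℝ _ (norm_ne_zero_iff.mpr hz)
    have hfc : Continuous fun w : WeakSpace ℝ X => f ((toWeakSpace ℝ X).symm w) :=
      WeakBilin.eval_continuous _ f
    have hfne : f ((toWeakSpace ℝ X).symm x) ≠ f ((toWeakSpace ℝ X).symm y) := by
      intro h
      have h2 : f ((toWeakSpace ℝ X).symm x - (toWeakSpace ℝ X).symm y) = 0 := by
        rw [map_sub, h, sub_self]
      rw [hf] at h2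
      exact hz (norm_eq_zero.mp h2)
    exact separated_by_continuous hfc hfne
  set S : Set (WeakSpace ℝ X) := toWeakSpace ℝ X '' K with hS
  haveI hcs : CompactSpace ↥S := isCompact_iff_compactSpace.mp hK
  haveI : Nonempty ↥S := (hne.image _).to_subtype
  set ι : ↥S → X := fun s => (toWeakSpace ℝ X).symm s.1 with hι0
  have hιK : ∀ s : ↥S, ι s ∈ K := by
    rintro ⟨-, x, hx, rfl⟩
    simpa [hι0] using hx
  have hι : ∀ f : X →L[ℝ] ℝ, Continuous fun s : ↥S => f (ι s) := fun f =>
    (WeakBilin.eval_continuous _ f).comp (continuous_subtype_val (p := (· ∈ S)))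
  set ev : (X →L[ℝ] ℝ) → C(↥S, ℝ) := fun f => ContinuousMap.mk (fun s => f (ι s)) (hι f)
    with hev
  -- uniform bound on K via Banach–Steinhaus
  obtain ⟨C, hC⟩ := banach_steinhaus
      (g := fun s : ↥S => NormedSpace.inclusionInDoubleDual ℝ X (ι s)) (by
    intro f
    refine ⟨‖ev f‖, fun s => ?_⟩
    have := (ev f).norm_coe_le_norm s
    simpa [NormedSpace.dual_def, hev] using this)
  set M : ℝ := max C 0 with hM
  have hMK : ∀ x ∈ K, ‖x‖ ≤ M := by
    intro x hx
    have hsx : toWeakSpace ℝ X x ∈ S := ⟨x, hx, rfl⟩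
    have hxval : ι ⟨toWeakSpace ℝ X x, hsx⟩ = x := by
      simp [hι0]
    refine NormedSpace.norm_le_dual_bound ℝ _ (le_max_right _ _) (fun f => ?_)
    have h1 : ‖NormedSpace.inclusionInDoubleDual ℝ X x f‖
        ≤ ‖NormedSpace.inclusionInDoubleDual ℝ X x‖ * ‖f‖ :=
      (NormedSpace.inclusionInDoubleDual ℝ X x).le_opNorm f
    have h2 := hC ⟨toWeakSpace ℝ X x, hsx⟩
    rw [hxval] at h2
    have h3 : ‖f x‖ = ‖NormedSpace.inclusionInDoubleDual ℝ X x f‖ := by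
      rw [NormedSpace.dual_def]
    rw [h3]
    calc ‖NormedSpace.inclusionInDoubleDual ℝ X x f‖
        ≤ ‖NormedSpace.inclusionInDoubleDual ℝ X x‖ * ‖f‖ := h1
      _ ≤ C * ‖f‖ := by gcongr
      _ ≤ M * ‖f‖ := by gcongr; exact le_max_left _ _
  -- dense sequence in K
  haveI := hsep.separableSpace
  haveI : Nonempty ↥K := hne.to_subtype
  obtain ⟨u, hu⟩ := TopologicalSpace.exists_dense_seq ↥K
  set d : ℕ → X := fun n => (u n : X) with hd
  have hdM : ∀ n, ‖d n‖ ≤ M := fun n => hMK _ (u n).2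
  have hdense : ∀ (s : ↥S) (ε : ℝ), 0 < ε → ∃ n, ‖ι s - d n‖ < ε := by
    intro s ε hε
    obtain ⟨n, hn⟩ := Metric.denseRange_iff.mp hu ⟨ι s, hιK s⟩ ε hε
    refine ⟨n, ?_⟩
    rwa [Subtype.dist_eq, dist_eq_norm] at hn
  -- the compact set of states
  set Q : Set (WeakDual ℝ C(↥S, ℝ)) :=
    {φ | ‖WeakDual.toStrongDual φ‖ ≤ 1} ∩
      ({φ | φ 1 = 1} ∩ {φ | ∀ g, 0 ≤ g → 0 ≤ φ g}) with hQ
  have hQc : IsCompact Q := by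
    refine IsCompact.inter_right ?_ ?_
    · have h := WeakDual.isCompact_closedBall (𝕜 := ℝ) (E := C(↥S, ℝ)) 0 1
      have heq : {φ : WeakDual ℝ C(↥S, ℝ) | ‖WeakDual.toStrongDual φ‖ ≤ 1}
          = WeakDual.toStrongDual ⁻¹' Metric.closedBall 0 1 := by
        ext φ
        simp [mem_closedBall_zero_iff, dist_zero_right]
        exact (iff_of_eq (congrArg (· ≤ (1:ℝ)) (dist_zero_right (E := StrongDual ℝ C(↥S, ℝ)) _))).symm
      rw [heq]
      exact h
    · refine IsClosed.inter ?_ ?_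
      · exact isClosed_eq (WeakDual.eval_continuous (1 : C(↥S, ℝ))) continuous_const
      · have heq : {φ : WeakDual ℝ C(↥S, ℝ) | ∀ g, 0 ≤ g → 0 ≤ φ g}
            = ⋂ (g : C(↥S, ℝ)) (_ : 0 ≤ g), {φ : WeakDual ℝ C(↥S, ℝ) | 0 ≤ φ g} := by
          ext φ
          simp
        rw [heq]
        exact isClosed_iInter fun g => isClosed_iInter fun hg =>
          isClosed_le continuous_const (WeakDual.eval_continuous g)
  have hstar : ∀ φ : WeakDual ℝ C(↥S, ℝ), φ ∈ Q →
      ∃ x : X, ∀ f : X →L[ℝ] ℝ, f x = φ (ev f) := by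
    intro φ hφ
    obtain ⟨x, hx⟩ := star_point ι hι M d hdM hdense
      (WeakDual.toStrongDual φ) hφ.2.2 hφ.2.1
    exact ⟨x, fun f => hx f⟩
  set G : WeakDual ℝ C(↥S, ℝ) → WeakSpace ℝ X := fun φ =>
    if h : φ ∈ Q then toWeakSpace ℝ X (hstar φ h).choose else toWeakSpace ℝ X 0 with hG
  have hGspec : ∀ φ (h : φ ∈ Q) (f : X →L[ℝ] ℝ), f ((hstar φ h).choose) = φ (ev f) :=
    fun φ h f => (hstar φ h).choose_spec f
  have hGcont : ContinuousOn G Q := by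
    rw [continuousOn_iff_continuous_restrict]
    apply WeakBilin.continuous_of_continuous_eval
    intro f
    have heq : (fun φ : ↥Q => (topDualPairing ℝ X).flip (Q.restrict G φ) f)
        = fun φ : ↥Q => φ.1 (ev f) := by
      funext φ
      have hres : Q.restrict G φ = toWeakSpace ℝ X (hstar φ.1 φ.2).choose := by
        show G φ.1 = _; simp only [hG]
        rw [dif_pos φ.2]
      rw [hres]
      exact hGspec φ.1 φ.2 f
    refine Continuous.congr ((WeakDual.eval_continuous (ev f)).comp continuous_subtype_val) (fun φ => ?_)
    exact (congrFun heq φ).symm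
  have hKG : IsCompact (G '' Q) := hQc.image_of_continuousOn hGcont
  set B : Set X := {x | ∃ φ ∈ Q, ∀ f : X →L[ℝ] ℝ, f x = φ (ev f)} with hB
  have hKB : K ⊆ B := by
    intro x hx
    have hsx : toWeakSpace ℝ X x ∈ S := ⟨x, hx, rfl⟩
    set s : ↥S := ⟨toWeakSpace ℝ X x, hsx⟩ with hs
    set δℓ : C(↥S, ℝ) →ₗ[ℝ] ℝ :=
      { toFun := fun g => g s, map_add' := fun g h => rfl, map_smul' := fun c g => rfl }
      with hδℓ
    set δ : C(↥S, ℝ) →L[ℝ] ℝ := LinearMap.mkContinuous δℓ 1 (fun g => by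
      show ‖g s‖ ≤ 1 * ‖g‖; simpa using g.norm_coe_le_norm s) with hδ
    refine ⟨δ, ⟨?_, ?_, ?_⟩, ?_⟩
    · show ‖WeakDual.toStrongDual δ‖ ≤ 1; exact LinearMap.mkContinuous_norm_le δℓ zero_le_one (fun g => by show ‖g s‖ ≤ 1 * ‖g‖; simpa using g.norm_coe_le_norm s)
    · show δ 1 = 1
      simp [hδ, hδℓ]
    · intro g hg
      exact hg s
    · intro f
      show f x = (ev f) s
      simp [hev, hι0, hs]
  have hBconv : Convex ℝ B := by
    intro x hx y hy a b ha hb hab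
    obtain ⟨φx, hφxQ, hφx⟩ := hx
    obtain ⟨φy, hφyQ, hφy⟩ := hy
    have happly : ∀ (g : C(↥S, ℝ)), (a • φx + b • φy) g = a * φx g + b * φy g :=
      fun g => rfl
    refine ⟨a • φx + b • φy, ⟨?_, ?_, ?_⟩, ?_⟩
    · show ‖WeakDual.toStrongDual (a • φx + b • φy)‖ ≤ 1
      have hnorm : WeakDual.toStrongDual (a • φx + b • φy)
          = a • WeakDual.toStrongDual φx + b • WeakDual.toStrongDual φy := rfl
      rw [hnorm]
      calc ‖a • WeakDual.toStrongDual φx + b • WeakDual.toStrongDual φy‖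
          ≤ ‖a • WeakDual.toStrongDual φx‖ + ‖b • WeakDual.toStrongDual φy‖ :=
            norm_add_le (E := StrongDual ℝ C(↥S, ℝ)) _ _
        _ = |a| * ‖WeakDual.toStrongDual φx‖ + |b| * ‖WeakDual.toStrongDual φy‖ := by
            have hs : ∀ (c : ℝ) (ψ : StrongDual ℝ C(↥S, ℝ)), ‖c • ψ‖ = |c| * ‖ψ‖ := fun c ψ => by
              have := @norm_smul ℝ (StrongDual ℝ C(↥S, ℝ)) _ _ _ (@NormedSpace.toNormSMulClass ℝ (StrongDual ℝ C(↥S, ℝ)) _ _ inferInstance) c ψ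
              rw [Real.norm_eq_abs] at this
              exact this
            exact congrArg₂ (· + ·) (hs a _) (hs b _)
        _ ≤ a * 1 + b * 1 := by
            rw [abs_of_nonneg ha, abs_of_nonneg hb]
            gcongr
            · exact hφxQ.1
            · exact hφyQ.1
        _ = 1 := by linarith
    · show (a • φx + b • φy) 1 = 1
      rw [happly, hφxQ.2.1, hφyQ.2.1]
      linarith
    · intro g hg
      rw [happly]
      have h1 := hφxQ.2.2 g hg
      have h2 := hφyQ.2.2 g hg
      nlinarith
    · intro f
      rw [happly, ← hφx f, ← hφy f, map_add, map_smul, map_smul, smul_eq_mul, smul_eq_mul]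
  have hhull : convexHull ℝ K ⊆ B := convexHull_min hKB hBconv
  have hBG : toWeakSpace ℝ X '' B ⊆ G '' Q := by
    rintro - ⟨x, ⟨φ, hφQ, hφ⟩, rfl⟩
    refine ⟨φ, hφQ, ?_⟩
    have hcx : (hstar φ hφQ).choose = x := by
      have h0 : ∀ f : X →L[ℝ] ℝ, f ((hstar φ hφQ).choose - x) = 0 := by
        intro f
        rw [map_sub, hGspec φ hφQ f, ← hφ f, sub_self]
      have := NormedSpace.eq_zero_of_forall_dual_eq_zero ℝ h0
      rwa [sub_eq_zero] at this
    rw [hG]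
    simp only
    rw [dif_pos hφQ, hcx]
  have hkey := (convex_convexHull ℝ K).toWeakSpace_closure (𝕜 := ℝ)
  rw [hkey]
  refine IsCompact.of_isClosed_subset hKG isClosed_closure ?_
  refine closure_minimal ?_ hKG.isClosed
  exact Set.Subset.trans (Set.image_mono hhull) hBG
end
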